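/- arXiv:1110.6645 — 7 statements merged into one kernel-verified Lean document; each statement's English description precedes it below -/
import Mathlib

section
/- The product of two spins is never a spin: if s₁ and s₂ are spins about rectangles R₁ and R₂ respectively (possibly equal), then s₁s₂ is not a spin about any rectangle. -/
/-- Positions on an `m × n` board, as (row, column) pairs. -/
abbrev Pos (m n : ℕ) := Fin m × Fin n

/-- An element `(α, u)` of the group `Spin_{m×n} = ℤ/2ℤ ≀ S_{mn}`: a permutation `α` of
the positions together with an orientation-flip vector `u ∈ (ℤ/2ℤ)^{mn}`. -/
@[ext] structure SpinElt (m n : ℕ) where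
  perm : Equiv.Perm (Pos m n)
  flip : Pos m n → ZMod 2

instance (m n : ℕ) : Group (SpinElt m n) where
  mul a b := ⟨a.perm * b.perm, fun p => a.flip p + b.flip (a.perm⁻¹ p)⟩
  one := ⟨1, 0⟩
  inv a := ⟨a.perm⁻¹, fun p => a.flip (a.perm p)⟩
  div a b := ⟨a.perm * b.perm⁻¹, fun p => a.flip p + b.flip (b.perm (a.perm⁻¹ p))⟩
  div_eq_mul_inv _ _ := rfl
  mul_assoc a b c := by
    refine SpinElt.ext (mul_assoc ..) (funext fun p => ?_)
    show a.flip p + b.flip (a.perm⁻¹ p) + c.flip ((a.perm * b.perm)⁻¹ p)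
        = a.flip p + (b.flip (a.perm⁻¹ p) + c.flip (b.perm⁻¹ (a.perm⁻¹ p)))
    simp [add_assoc]
  one_mul a := by
    refine SpinElt.ext (one_mul _) (funext fun p => ?_)
    show 0 + a.flip ((1 : Equiv.Perm (Pos m n))⁻¹ p) = a.flip p
    simp
  mul_one a := by
    refine SpinElt.ext (mul_one _) (funext fun p => ?_)
    show a.flip p + 0 = a.flip p
    simp
  inv_mul_cancel a := by
    refine SpinElt.ext (inv_mul_cancel _) (funext fun p => ?_)
    show a.flip (a.perm p) + a.flip ((a.perm⁻¹)⁻¹ p) = 0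
    simp [CharTwo.add_self_eq_zero]

@[simp] lemma SpinElt.mul_def {m n : ℕ} (a b : SpinElt m n) :
    a * b = ⟨a.perm * b.perm, fun p => a.flip p + b.flip (a.perm⁻¹ p)⟩ := rfl

@[simp] lemma SpinElt.one_def {m n : ℕ} : (1 : SpinElt m n) = ⟨1, 0⟩ := rfl

@[simp] lemma SpinElt.inv_def {m n : ℕ} (a : SpinElt m n) :
    a⁻¹ = ⟨a.perm⁻¹, fun p => a.flip (a.perm p)⟩ := rfl

/-- A rectangle on the `m × n` board, given by its top-left corner `(r1, c1)` and
bottom-right corner `(r2, c2)` (0-indexed). -/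
structure Rect (m n : ℕ) where
  r1 : ℕ
  c1 : ℕ
  r2 : ℕ
  c2 : ℕ
  hr : r1 ≤ r2
  hc : c1 ≤ c2
  hm : r2 < m
  hn : c2 < n

/-- Membership of a position in a rectangle. -/
def Rect.Mem {m n : ℕ} (R : Rect m n) (p : Pos m n) : Prop :=
  R.r1 ≤ p.1.val ∧ p.1.val ≤ R.r2 ∧ R.c1 ≤ p.2.val ∧ p.2.val ≤ R.c2

instance {m n : ℕ} (R : Rect m n) (p : Pos m n) : Decidable (R.Mem p) := by
  unfold Rect.Mem; infer_instance

/-- Rotation of the board by 180° about the center of `R`, fixing everything outside `R`. -/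
def Rect.rotFun {m n : ℕ} (R : Rect m n) (p : Pos m n) : Pos m n :=
  if h : R.Mem p then
    (⟨R.r1 + R.r2 - p.1.val, by obtain ⟨h1, h2, h3, h4⟩ := h; have := R.hm; omega⟩,
     ⟨R.c1 + R.c2 - p.2.val, by obtain ⟨h1, h2, h3, h4⟩ := h; have := R.hn; omega⟩)
  else p

lemma Rect.rotFun_fst {m n : ℕ} (R : Rect m n) (p : Pos m n) (h : R.Mem p) :
    ((R.rotFun p).1 : ℕ) = R.r1 + R.r2 - p.1.val := by
  simp only [Rect.rotFun, dif_pos h]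

lemma Rect.rotFun_snd {m n : ℕ} (R : Rect m n) (p : Pos m n) (h : R.Mem p) :
    ((R.rotFun p).2 : ℕ) = R.c1 + R.c2 - p.2.val := by
  simp only [Rect.rotFun, dif_pos h]

lemma Rect.rotFun_of_not_mem {m n : ℕ} (R : Rect m n) (p : Pos m n) (h : ¬ R.Mem p) :
    R.rotFun p = p := dif_neg h

lemma Rect.mem_rotFun {m n : ℕ} (R : Rect m n) (p : Pos m n) (h : R.Mem p) :
    R.Mem (R.rotFun p) := by
  obtain ⟨h1, h2, h3, h4⟩ := id h
  refine ⟨?_, ?_, ?_, ?_⟩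
  · rw [R.rotFun_fst p h]; omega
  · rw [R.rotFun_fst p h]; omega
  · rw [R.rotFun_snd p h]; omega
  · rw [R.rotFun_snd p h]; omega

lemma Rect.rotFun_involutive {m n : ℕ} (R : Rect m n) : Function.Involutive R.rotFun := by
  intro p
  by_cases h : R.Mem p
  · have h2 := R.mem_rotFun p h
    obtain ⟨h1', h2', h3', h4'⟩ := id h
    have e1 := R.rotFun_fst p h
    have e2 := R.rotFun_snd p h
    refine Prod.ext (Fin.ext ?_) (Fin.ext ?_)
    · rw [R.rotFun_fst _ h2, e1]; omega
    · rw [R.rotFun_snd _ h2, e2]; omega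
  · rw [R.rotFun_of_not_mem p h, R.rotFun_of_not_mem p h]

/-- The permutation of positions effected by the spin about `R`. -/
def Rect.spinPerm {m n : ℕ} (R : Rect m n) : Equiv.Perm (Pos m n) :=
  Function.Involutive.toPerm R.rotFun R.rotFun_involutive

/-- The spin about the rectangle `R`: it rotates the tiles in `R` by 180° and flips
the orientation of every tile in `R`. -/
def Rect.spin {m n : ℕ} (R : Rect m n) : SpinElt m n :=
  ⟨R.spinPerm, fun p => if R.Mem p then 1 else 0⟩

/-- An element of `Spin_{m×n}` is a spin if it is the spin about some rectangle. -/
def IsSpin {m n : ℕ} (x : SpinElt m n) : Prop := ∃ R : Rect m n, x = R.spin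

/-- The dimensions (number of rows, number of columns) of a rectangle. -/
def Rect.dims {m n : ℕ} (R : Rect m n) : ℕ × ℕ := (R.r2 + 1 - R.r1, R.c2 + 1 - R.c1)

/-- A spin squares to the identity. -/
lemma Rect.spin_sq {m n : ℕ} (R : Rect m n) : R.spin * R.spin = 1 := by
  refine SpinElt.ext ?_ ?_
  · exact Equiv.ext fun p => R.rotFun_involutive p
  · funext p
    show (if R.Mem p then (1 : ZMod 2) else 0) + (if R.Mem (R.rotFun p) then 1 else 0) = 0
    by_cases h : R.Mem p
    · rw [if_pos h, if_pos (R.mem_rotFun p h)]; decide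
    · rw [if_neg h, R.rotFun_of_not_mem p h, if_neg h]; decide

lemma spin_swap {m n : ℕ} {R₁ R₂ R₃ : Rect m n} (h : R₁.spin * R₂.spin = R₃.spin) :
    R₂.spin * R₁.spin = R₃.spin := by
  have i1 : R₁.spin⁻¹ = R₁.spin := inv_eq_of_mul_eq_one_right (Rect.spin_sq R₁)
  have i2 : R₂.spin⁻¹ = R₂.spin := inv_eq_of_mul_eq_one_right (Rect.spin_sq R₂)
  have i3 : R₃.spin⁻¹ = R₃.spin := inv_eq_of_mul_eq_one_right (Rect.spin_sq R₃)
  rw [← i2, ← i1, ← mul_inv_rev, h, i3]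

lemma spin_perm_eq {m n : ℕ} {R₁ R₂ R₃ : Rect m n} (h : R₁.spin * R₂.spin = R₃.spin) :
    ∀ p, R₁.rotFun (R₂.rotFun p) = R₃.rotFun p := by
  intro p
  have := congrArg SpinElt.perm h
  exact congrFun (congrArg (fun (e : Equiv.Perm (Pos m n)) => (e : Pos m n → Pos m n)) this) p

lemma flip_aux {A B C : Prop} [Decidable A] [Decidable B] [Decidable C]
    (h : (if A then (1 : ZMod 2) else 0) + (if B then 1 else 0) = (if C then 1 else 0)) :
    C ↔ (A ↔ ¬ B) := by
  by_cases hA : A <;> by_cases hB : B <;> by_cases hC : C <;>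
    simp only [hA, hB, hC, if_true, if_false] at h <;> simp_all

lemma spin_flip_eq {m n : ℕ} {R₁ R₂ R₃ : Rect m n} (h : R₁.spin * R₂.spin = R₃.spin) :
    ∀ p, (R₃.Mem p ↔ (R₁.Mem p ↔ ¬ R₂.Mem (R₁.rotFun p))) := by
  intro p
  have hf : (if R₁.Mem p then (1 : ZMod 2) else 0)
      + (if R₂.Mem (R₁.rotFun p) then 1 else 0) = (if R₃.Mem p then 1 else 0) :=
    congrFun (congrArg SpinElt.flip h) p
  exact flip_aux hf

set_option maxHeartbeats 1000000 in
lemma arith (m n a1 b1 c1 d1 a2 b2 c2 d2 a3 b3 c3 d3 : ℕ)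
  (hb1 : a1 ≤ b1) (hb1' : c1 ≤ d1) (hb1'' : b1 < m) (hb1''' : d1 < n)
  (hb2 : a2 ≤ b2) (hb2' : c2 ≤ d2) (hb2'' : b2 < m) (hb2''' : d2 < n)
  (hb3 : a3 ≤ b3) (hb3' : c3 ≤ d3) (hb3'' : b3 < m) (hb3''' : d3 < n)
  (h12 : ∀ x y, x < m → y < n → (a1 ≤ x ∧ x ≤ b1 ∧ c1 ≤ y ∧ y ≤ d1) →
      ¬(a2 ≤ x ∧ x ≤ b2 ∧ c2 ≤ y ∧ y ≤ d2) →
      (a3 ≤ x ∧ x ≤ b3 ∧ c3 ≤ y ∧ y ≤ d3) ∧ a3 + b3 - x = a1 + b1 - x ∧ c3 + d3 - y = c1 + d1 - y)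
  (h21 : ∀ x y, x < m → y < n → (a2 ≤ x ∧ x ≤ b2 ∧ c2 ≤ y ∧ y ≤ d2) →
      ¬(a1 ≤ x ∧ x ≤ b1 ∧ c1 ≤ y ∧ y ≤ d1) →
      (a3 ≤ x ∧ x ≤ b3 ∧ c3 ≤ y ∧ y ≤ d3) ∧ a3 + b3 - x = a2 + b2 - x ∧ c3 + d3 - y = c2 + d2 - y)
  (hout : ∀ x y, x < m → y < n → ¬(a1 ≤ x ∧ x ≤ b1 ∧ c1 ≤ y ∧ y ≤ d1) →
      ¬(a2 ≤ x ∧ x ≤ b2 ∧ c2 ≤ y ∧ y ≤ d2) → ¬(a3 ≤ x ∧ x ≤ b3 ∧ c3 ≤ y ∧ y ≤ d3))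
  (h4 : ∀ x y, x < m → y < n → (a1 ≤ x ∧ x ≤ b1 ∧ c1 ≤ y ∧ y ≤ d1) →
      (a2 ≤ a1 + b1 - x ∧ a1 + b1 - x ≤ b2 ∧ c2 ≤ c1 + d1 - y ∧ c1 + d1 - y ≤ d2) →
      ¬(a3 ≤ x ∧ x ≤ b3 ∧ c3 ≤ y ∧ y ≤ d3))
  (h4' : ∀ x y, x < m → y < n → (a2 ≤ x ∧ x ≤ b2 ∧ c2 ≤ y ∧ y ≤ d2) →
      (a1 ≤ a2 + b2 - x ∧ a2 + b2 - x ≤ b1 ∧ c1 ≤ c2 + d2 - y ∧ c2 + d2 - y ≤ d1) →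
      ¬(a3 ≤ x ∧ x ≤ b3 ∧ c3 ≤ y ∧ y ≤ d3)) : False := by
  have i1 := h12 a1 c1 (by omega) (by omega)
  have i2 := h12 b1 d1 (by omega) (by omega)
  have i3 := h21 a2 c2 (by omega) (by omega)
  have i4 := h21 b2 d2 (by omega) (by omega)
  have i5 := hout a3 c3 (by omega) (by omega)
  have i6 := hout b3 d3 (by omega) (by omega)
  have i7 := hout a1 c2 (by omega) (by omega)
  have i8 := hout a2 c1 (by omega) (by omega)
  have i9 := h4 a1 c1 (by omega) (by omega)
  have i10 := h4 a3 c3 (by omega) (by omega)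
  have i11 := h4' a2 c2 (by omega) (by omega)
  clear h12 h21 hout h4 h4'
  by_cases hP : a2 ≤ a1 ∧ b1 ≤ b2 ∧ c2 ≤ c1 ∧ d1 ≤ d2 <;>
    by_cases hQ : a1 ≤ a2 ∧ b2 ≤ b1 ∧ c1 ≤ c2 ∧ d2 ≤ d1
  · clear i1 i2 i3 i4 i6 i7 i8 i9 i11; omega
  · clear i1 i2 i7 i8 i10 i11; omega
  · clear i3 i4 i7 i8 i9 i10; omega
  · clear i5 i6 i9 i10 i11; omega

/-- The product of two spins (about possibly equal rectangles) is never a spin. -/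
theorem stmt3 (m n : ℕ) (R₁ R₂ : Rect m n) : ¬ IsSpin (R₁.spin * R₂.spin) := by
  rintro ⟨R₃, h⟩
  have h' : R₁.spin * R₂.spin = R₃.spin := h
  have hsw := spin_swap h'
  have hperm12 := spin_perm_eq h'
  have hperm21 := spin_perm_eq hsw
  have hflip12 := spin_flip_eq h'
  have hflip21 := spin_flip_eq hsw
  -- abbreviations for the rectangle fields
  have hb₁ := R₁.hr; have hb₁' := R₁.hc; have hb₁'' := R₁.hm; have hb₁''' := R₁.hn
  have hb₂ := R₂.hr; have hb₂' := R₂.hc; have hb₂'' := R₂.hm; have hb₂''' := R₂.hn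
  have hb₃ := R₃.hr; have hb₃' := R₃.hc; have hb₃'' := R₃.hm; have hb₃''' := R₃.hn
  have h12 : ∀ x y (hx : x < m) (hy : y < n),
      (R₁.r1 ≤ x ∧ x ≤ R₁.r2 ∧ R₁.c1 ≤ y ∧ y ≤ R₁.c2) →
      ¬(R₂.r1 ≤ x ∧ x ≤ R₂.r2 ∧ R₂.c1 ≤ y ∧ y ≤ R₂.c2) →
      (R₃.r1 ≤ x ∧ x ≤ R₃.r2 ∧ R₃.c1 ≤ y ∧ y ≤ R₃.c2)
        ∧ R₃.r1 + R₃.r2 - x = R₁.r1 + R₁.r2 - x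
        ∧ R₃.c1 + R₃.c2 - y = R₁.c1 + R₁.c2 - y := by
    intro x y hx hy h1 h2
    have hm1 : R₁.Mem (⟨x, hx⟩, ⟨y, hy⟩) := h1
    have hm2 : ¬ R₂.Mem (⟨x, hx⟩, ⟨y, hy⟩) := h2
    have hrot2 := R₂.rotFun_of_not_mem _ hm2
    have hm3 : R₃.Mem (⟨x, hx⟩, ⟨y, hy⟩) := by
      have := hflip21 (⟨x, hx⟩, ⟨y, hy⟩)
      rw [hrot2] at this
      tauto
    have e : R₁.rotFun (⟨x, hx⟩, ⟨y, hy⟩) = R₃.rotFun (⟨x, hx⟩, ⟨y, hy⟩) := by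
      rw [← hperm12 (⟨x, hx⟩, ⟨y, hy⟩), hrot2]
    have e1 := R₁.rotFun_fst _ hm1
    have e1' := R₃.rotFun_fst _ hm3
    have e2 := R₁.rotFun_snd _ hm1
    have e2' := R₃.rotFun_snd _ hm3
    rw [e] at e1 e2
    rw [e1'] at e1
    rw [e2'] at e2
    exact ⟨hm3, e1, e2⟩
  have h21 : ∀ x y (hx : x < m) (hy : y < n),
      (R₂.r1 ≤ x ∧ x ≤ R₂.r2 ∧ R₂.c1 ≤ y ∧ y ≤ R₂.c2) →
      ¬(R₁.r1 ≤ x ∧ x ≤ R₁.r2 ∧ R₁.c1 ≤ y ∧ y ≤ R₁.c2) →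
      (R₃.r1 ≤ x ∧ x ≤ R₃.r2 ∧ R₃.c1 ≤ y ∧ y ≤ R₃.c2)
        ∧ R₃.r1 + R₃.r2 - x = R₂.r1 + R₂.r2 - x
        ∧ R₃.c1 + R₃.c2 - y = R₂.c1 + R₂.c2 - y := by
    intro x y hx hy h2 h1
    have hm2 : R₂.Mem (⟨x, hx⟩, ⟨y, hy⟩) := h2
    have hm1 : ¬ R₁.Mem (⟨x, hx⟩, ⟨y, hy⟩) := h1
    have hrot1 := R₁.rotFun_of_not_mem _ hm1
    have hm3 : R₃.Mem (⟨x, hx⟩, ⟨y, hy⟩) := by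
      have := hflip12 (⟨x, hx⟩, ⟨y, hy⟩)
      rw [hrot1] at this
      tauto
    have e : R₂.rotFun (⟨x, hx⟩, ⟨y, hy⟩) = R₃.rotFun (⟨x, hx⟩, ⟨y, hy⟩) := by
      rw [← hperm21 (⟨x, hx⟩, ⟨y, hy⟩), hrot1]
    have e1 := R₂.rotFun_fst _ hm2
    have e1' := R₃.rotFun_fst _ hm3
    have e2 := R₂.rotFun_snd _ hm2
    have e2' := R₃.rotFun_snd _ hm3
    rw [e] at e1 e2
    rw [e1'] at e1
    rw [e2'] at e2
    exact ⟨hm3, e1, e2⟩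
  have hout : ∀ x y (hx : x < m) (hy : y < n),
      ¬(R₁.r1 ≤ x ∧ x ≤ R₁.r2 ∧ R₁.c1 ≤ y ∧ y ≤ R₁.c2) →
      ¬(R₂.r1 ≤ x ∧ x ≤ R₂.r2 ∧ R₂.c1 ≤ y ∧ y ≤ R₂.c2) →
      ¬(R₃.r1 ≤ x ∧ x ≤ R₃.r2 ∧ R₃.c1 ≤ y ∧ y ≤ R₃.c2) := by
    intro x y hx hy h1 h2 h3
    have hm1 : ¬ R₁.Mem (⟨x, hx⟩, ⟨y, hy⟩) := h1
    have hm2 : ¬ R₂.Mem (⟨x, hx⟩, ⟨y, hy⟩) := h2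
    have hm3 : R₃.Mem (⟨x, hx⟩, ⟨y, hy⟩) := h3
    have hrot1 := R₁.rotFun_of_not_mem _ hm1
    have := hflip12 (⟨x, hx⟩, ⟨y, hy⟩)
    rw [hrot1] at this
    tauto
  have h4 : ∀ x y (hx : x < m) (hy : y < n),
      (R₁.r1 ≤ x ∧ x ≤ R₁.r2 ∧ R₁.c1 ≤ y ∧ y ≤ R₁.c2) →
      (R₂.r1 ≤ R₁.r1 + R₁.r2 - x ∧ R₁.r1 + R₁.r2 - x ≤ R₂.r2
        ∧ R₂.c1 ≤ R₁.c1 + R₁.c2 - y ∧ R₁.c1 + R₁.c2 - y ≤ R₂.c2) →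
      ¬(R₃.r1 ≤ x ∧ x ≤ R₃.r2 ∧ R₃.c1 ≤ y ∧ y ≤ R₃.c2) := by
    intro x y hx hy h1 h2 h3
    have hm1 : R₁.Mem (⟨x, hx⟩, ⟨y, hy⟩) := h1
    have hm3 : R₃.Mem (⟨x, hx⟩, ⟨y, hy⟩) := h3
    have e1 := R₁.rotFun_fst _ hm1
    have e2 := R₁.rotFun_snd _ hm1
    have hm2 : R₂.Mem (R₁.rotFun (⟨x, hx⟩, ⟨y, hy⟩)) := by
      refine ⟨?_, ?_, ?_, ?_⟩
      · rw [e1]; exact h2.1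
      · rw [e1]; exact h2.2.1
      · rw [e2]; exact h2.2.2.1
      · rw [e2]; exact h2.2.2.2
    have := hflip12 (⟨x, hx⟩, ⟨y, hy⟩)
    tauto
  have h4' : ∀ x y (hx : x < m) (hy : y < n),
      (R₂.r1 ≤ x ∧ x ≤ R₂.r2 ∧ R₂.c1 ≤ y ∧ y ≤ R₂.c2) →
      (R₁.r1 ≤ R₂.r1 + R₂.r2 - x ∧ R₂.r1 + R₂.r2 - x ≤ R₁.r2
        ∧ R₁.c1 ≤ R₂.c1 + R₂.c2 - y ∧ R₂.c1 + R₂.c2 - y ≤ R₁.c2) →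
      ¬(R₃.r1 ≤ x ∧ x ≤ R₃.r2 ∧ R₃.c1 ≤ y ∧ y ≤ R₃.c2) := by
    intro x y hx hy h2 h1 h3
    have hm2 : R₂.Mem (⟨x, hx⟩, ⟨y, hy⟩) := h2
    have hm3 : R₃.Mem (⟨x, hx⟩, ⟨y, hy⟩) := h3
    have e1 := R₂.rotFun_fst _ hm2
    have e2 := R₂.rotFun_snd _ hm2
    have hm1 : R₁.Mem (R₂.rotFun (⟨x, hx⟩, ⟨y, hy⟩)) := by
      refine ⟨?_, ?_, ?_, ?_⟩
      · rw [e1]; exact h1.1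
      · rw [e1]; exact h1.2.1
      · rw [e2]; exact h1.2.2.1
      · rw [e2]; exact h1.2.2.2
    have := hflip21 (⟨x, hx⟩, ⟨y, hy⟩)
    tauto
  exact arith m n R₁.r1 R₁.r2 R₁.c1 R₁.c2 R₂.r1 R₂.r2 R₂.c1 R₂.c2 R₃.r1 R₃.r2 R₃.c1 R₃.c2
    hb₁ hb₁' hb₁'' hb₁''' hb₂ hb₂' hb₂'' hb₂''' hb₃ hb₃' hb₃'' hb₃'''
    (fun x y hx hy => h12 x y hx hy) (fun x y hx hy => h21 x y hx hy)
    (fun x y hx hy => hout x y hx hy) (fun x y hx hy => h4 x y hx hy)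
    (fun x y hx hy => h4' x y hx hy)
end

section
/- Two spins s₁ and s₂ about rectangles R₁ and R₂ commute (s₁s₂ = s₂s₁) if and only if R₁ and R₂ are disjoint or have a common center. -/
/-- Two rectangles are disjoint when they share no position. -/
def Rect.Disj {m n : ℕ} (R₁ R₂ : Rect m n) : Prop :=
  ∀ p : Pos m n, ¬ (R₁.Mem p ∧ R₂.Mem p)

/-- Two rectangles have a common center when their centers (centroids) coincide, i.e.
`(r1 + r2)/2` and `(c1 + c2)/2` agree. -/
def Rect.SameCenter {m n : ℕ} (R₁ R₂ : Rect m n) : Prop :=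
  R₁.r1 + R₁.r2 = R₂.r1 + R₂.r2 ∧ R₁.c1 + R₁.c2 = R₂.c1 + R₂.c2


section Aux

variable {m n : ℕ}

lemma Rect.spinPerm_apply (R : Rect m n) (p : Pos m n) : R.spinPerm p = R.rotFun p := rfl

lemma Rect.spinPerm_inv_apply (R : Rect m n) (p : Pos m n) : R.spinPerm⁻¹ p = R.rotFun p := rfl

lemma spin_comm_iff (R₁ R₂ : Rect m n) :
    R₁.spin * R₂.spin = R₂.spin * R₁.spin ↔
      (∀ p, R₁.rotFun (R₂.rotFun p) = R₂.rotFun (R₁.rotFun p)) ∧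
      (∀ p, (if R₁.Mem p then (1 : ZMod 2) else 0) + (if R₂.Mem (R₁.rotFun p) then 1 else 0)
          = (if R₂.Mem p then (1 : ZMod 2) else 0) + (if R₁.Mem (R₂.rotFun p) then 1 else 0)) := by
  rw [SpinElt.mul_def, SpinElt.mul_def, SpinElt.mk.injEq]
  constructor
  · rintro ⟨h1, h2⟩
    constructor
    · intro p
      have := Equiv.ext_iff.mp h1 p
      simpa [Rect.spin, Equiv.Perm.mul_apply, Rect.spinPerm_apply] using this
    · intro p
      exact congrFun h2 p
  · rintro ⟨h1, h2⟩
    refine ⟨Equiv.ext fun p => ?_, funext fun p => h2 p⟩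
    simpa [Rect.spin, Equiv.Perm.mul_apply, Rect.spinPerm_apply] using h1 p

/-- From the flip commutation condition: a point of `R₁` outside `R₂` stays outside `R₂`
after rotating about `R₁`. -/
lemma flip_out (R₁ R₂ : Rect m n)
    (hf : ∀ p, (if R₁.Mem p then (1 : ZMod 2) else 0) + (if R₂.Mem (R₁.rotFun p) then 1 else 0)
          = (if R₂.Mem p then (1 : ZMod 2) else 0) + (if R₁.Mem (R₂.rotFun p) then 1 else 0))
    (p : Pos m n) (h1 : R₁.Mem p) (h2 : ¬ R₂.Mem p) : ¬ R₂.Mem (R₁.rotFun p) := by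
  intro hmem
  have := hf p
  rw [R₂.rotFun_of_not_mem p h2, if_pos h1, if_pos hmem, if_neg h2] at this
  exact absurd this (by decide)

lemma flip_in (R₁ R₂ : Rect m n)
    (hf : ∀ p, (if R₁.Mem p then (1 : ZMod 2) else 0) + (if R₂.Mem (R₁.rotFun p) then 1 else 0)
          = (if R₂.Mem p then (1 : ZMod 2) else 0) + (if R₁.Mem (R₂.rotFun p) then 1 else 0))
    (p : Pos m n) (h1 : R₁.Mem p) (h2 : R₂.Mem p) : R₂.Mem (R₁.rotFun p) := by
  by_contra hmem
  have h1' : R₁.Mem (R₁.rotFun p) := R₁.mem_rotFun p h1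
  have := flip_out R₁ R₂ hf (R₁.rotFun p) h1' hmem
  rw [R₁.rotFun_involutive p] at this
  exact this h2

/-- If the two rectangles share a common center, rotation about either one preserves
membership in the other. -/
lemma sc_mem (R₁ R₂ : Rect m n) (hsc : R₁.SameCenter R₂) (p : Pos m n) :
    R₂.Mem (R₁.rotFun p) ↔ R₂.Mem p := by
  obtain ⟨ha, hb⟩ := hsc
  by_cases h1 : R₁.Mem p
  · have e1 := R₁.rotFun_fst p h1
    have e2 := R₁.rotFun_snd p h1
    obtain ⟨q1, q2, q3, q4⟩ := h1
    constructor <;> rintro ⟨u1, u2, u3, u4⟩ <;> refine ⟨?_, ?_, ?_, ?_⟩ <;> omega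
  · rw [R₁.rotFun_of_not_mem p h1]

lemma sc_symm (R₁ R₂ : Rect m n) (hsc : R₁.SameCenter R₂) : R₂.SameCenter R₁ :=
  ⟨hsc.1.symm, hsc.2.symm⟩

theorem spin_comm (m n : ℕ) (R₁ R₂ : Rect m n) :
    R₁.spin * R₂.spin = R₂.spin * R₁.spin ↔ R₁.Disj R₂ ∨ R₁.SameCenter R₂ := by
  rw [spin_comm_iff]
  constructor
  · rintro ⟨hperm, hf⟩
    by_cases hd : R₁.Disj R₂
    · exact Or.inl hd
    right
    simp only [Rect.Disj, not_forall, not_not] at hd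
    obtain ⟨⟨x₀, y₀⟩, hp1, hp2⟩ := hd
    obtain ⟨a1, a2, a3, a4⟩ := hp1
    obtain ⟨b1, b2, b3, b4⟩ := hp2
    simp only [] at a1 a2 a3 a4 b1 b2 b3 b4
    have hf' := fun p h1 h2 => flip_in R₁ R₂ hf p h1 h2
    have hf'' : ∀ p, R₂.Mem p → R₁.Mem p → R₁.Mem (R₂.rotFun p) := by
      intro p h1 h2
      exact flip_in R₂ R₁ (fun q => (hf q).symm) p h1 h2
    -- key corner points of the intersection
    have hm := R₁.hm; have hn := R₁.hn; have hm2 := R₂.hm; have hn2 := R₂.hn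
    have key : ∀ x y : ℕ, (hx1 : R₁.r1 ≤ x) → (hx2 : x ≤ R₁.r2) → (hx3 : R₂.r1 ≤ x) →
        (hx4 : x ≤ R₂.r2) → (hy1 : R₁.c1 ≤ y) → (hy2 : y ≤ R₁.c2) → (hy3 : R₂.c1 ≤ y) →
        (hy4 : y ≤ R₂.c2) →
        (R₂.r1 ≤ R₁.r1 + R₁.r2 - x ∧ R₁.r1 + R₁.r2 - x ≤ R₂.r2 ∧
         R₂.c1 ≤ R₁.c1 + R₁.c2 - y ∧ R₁.c1 + R₁.c2 - y ≤ R₂.c2) ∧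
        (R₁.r1 ≤ R₂.r1 + R₂.r2 - x ∧ R₂.r1 + R₂.r2 - x ≤ R₁.r2 ∧
         R₁.c1 ≤ R₂.c1 + R₂.c2 - y ∧ R₂.c1 + R₂.c2 - y ≤ R₁.c2) := by
      intro x y hx1 hx2 hx3 hx4 hy1 hy2 hy3 hy4
      have hxm : x < m := lt_of_le_of_lt hx2 hm
      have hyn : y < n := lt_of_le_of_lt hy2 hn
      set p : Pos m n := (⟨x, hxm⟩, ⟨y, hyn⟩)
      have hp1 : R₁.Mem p := ⟨hx1, hx2, hy1, hy2⟩
      have hp2 : R₂.Mem p := ⟨hx3, hx4, hy3, hy4⟩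
      have k1 := hf' p hp1 hp2
      have k2 := hf'' p hp2 hp1
      obtain ⟨c1, c2, c3, c4⟩ := k1
      obtain ⟨d1, d2, d3, d4⟩ := k2
      rw [R₁.rotFun_fst p hp1] at c1 c2
      rw [R₁.rotFun_snd p hp1] at c3 c4
      rw [R₂.rotFun_fst p hp2] at d1 d2
      rw [R₂.rotFun_snd p hp2] at d3 d4
      exact ⟨⟨c1, c2, c3, c4⟩, ⟨d1, d2, d3, d4⟩⟩
    have K1 := key (max R₁.r1 R₂.r1) y₀ (le_max_left _ _) (by omega) (le_max_right _ _)
      (by omega) a3 a4 b3 b4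
    have K2 := key (min R₁.r2 R₂.r2) y₀ (by omega) (min_le_left _ _) (by omega)
      (min_le_right _ _) a3 a4 b3 b4
    have K3 := key x₀ (max R₁.c1 R₂.c1) a1 a2 b1 b2 (le_max_left _ _) (by omega)
      (le_max_right _ _) (by omega)
    have K4 := key x₀ (min R₁.c2 R₂.c2) a1 a2 b1 b2 (by omega) (min_le_left _ _) (by omega)
      (min_le_right _ _)
    constructor
    · obtain ⟨⟨c1, c2, -, -⟩, ⟨d1, d2, -, -⟩⟩ := K1
      obtain ⟨⟨c1', c2', -, -⟩, ⟨d1', d2', -, -⟩⟩ := K2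
      have h1 := R₁.hr; have h2 := R₂.hr
      omega
    · obtain ⟨⟨-, -, c3, c4⟩, ⟨-, -, d3, d4⟩⟩ := K3
      obtain ⟨⟨-, -, c3', c4'⟩, ⟨-, -, d3', d4'⟩⟩ := K4
      have h1 := R₁.hc; have h2 := R₂.hc
      omega
  · rintro (hd | hsc)
    · have mem1 : ∀ p, R₂.Mem (R₁.rotFun p) ↔ R₂.Mem p := by
        intro p
        by_cases h1 : R₁.Mem p
        · constructor
          · intro h; exact absurd ⟨R₁.mem_rotFun p h1, h⟩ (hd _)
          · intro h; exact absurd ⟨h1, h⟩ (hd p)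
        · rw [R₁.rotFun_of_not_mem p h1]
      have mem2 : ∀ p, R₁.Mem (R₂.rotFun p) ↔ R₁.Mem p := by
        intro p
        by_cases h2 : R₂.Mem p
        · constructor
          · intro h; exact absurd ⟨h, R₂.mem_rotFun p h2⟩ (hd _)
          · intro h; exact absurd ⟨h, h2⟩ (hd p)
        · rw [R₂.rotFun_of_not_mem p h2]
      constructor
      · intro p
        by_cases h1 : R₁.Mem p
        · have h2 : ¬ R₂.Mem p := fun h => hd p ⟨h1, h⟩
          rw [R₂.rotFun_of_not_mem p h2,
            R₂.rotFun_of_not_mem _ (fun h => h2 ((mem1 p).mp h))]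
        · by_cases h2 : R₂.Mem p
          · rw [R₁.rotFun_of_not_mem p h1,
              R₁.rotFun_of_not_mem _ (fun h => h1 ((mem2 p).mp h))]
          · simp [R₁.rotFun_of_not_mem p h1, R₂.rotFun_of_not_mem p h2]
      · intro p
        rw [if_congr (mem1 p) rfl rfl, if_congr (mem2 p) rfl rfl, add_comm]
    · have mem1 := sc_mem R₁ R₂ hsc
      have mem2 := sc_mem R₂ R₁ (sc_symm R₁ R₂ hsc)
      constructor
      · intro p
        by_cases h1 : R₁.Mem p
        · by_cases h2 : R₂.Mem p
          · have heq : R₂.rotFun p = R₁.rotFun p := by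
              obtain ⟨ha, hb⟩ := hsc
              refine Prod.ext (Fin.ext ?_) (Fin.ext ?_)
              · rw [R₁.rotFun_fst p h1, R₂.rotFun_fst p h2]; omega
              · rw [R₁.rotFun_snd p h1, R₂.rotFun_snd p h2]; omega
            rw [heq, R₁.rotFun_involutive p, ← heq, R₂.rotFun_involutive p]
          · rw [R₂.rotFun_of_not_mem p h2,
              R₂.rotFun_of_not_mem _ (fun h => h2 ((mem1 p).mp h))]
        · by_cases h2 : R₂.Mem p
          · rw [R₁.rotFun_of_not_mem p h1,
              R₁.rotFun_of_not_mem _ (fun h => h1 ((mem2 p).mp h))]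
          · simp [R₁.rotFun_of_not_mem p h1, R₂.rotFun_of_not_mem p h2]
      · intro p
        rw [if_congr (mem1 p) rfl rfl, if_congr (mem2 p) rfl rfl, add_comm]

end Aux

/-- Two spins commute if and only if their rectangles are disjoint or have a common
center. -/
theorem stmt4 (m n : ℕ) (R₁ R₂ : Rect m n) :
    R₁.spin * R₂.spin = R₂.spin * R₁.spin ↔ R₁.Disj R₂ ∨ R₁.SameCenter R₂ :=
  spin_comm m n R₁ R₂
end

section
/- For spins s₁, s₂ about rectangles R₁, R₂, the conjugate s₁s₂s₁ is a spin if and only if either s₁ and s₂ commute or R₁ contains R₂; moreover, in the latter case the rectangle of the spin s₁s₂s₁ has the same dimensions (shape) as R₂. -/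
/-- `R₁` contains `R₂`. -/
def Rect.Contains {m n : ℕ} (R₁ R₂ : Rect m n) : Prop :=
  R₁.r1 ≤ R₂.r1 ∧ R₂.r2 ≤ R₁.r2 ∧ R₁.c1 ≤ R₂.c1 ∧ R₂.c2 ≤ R₁.c2

namespace SpinAux
variable {m n : ℕ}

lemma conj_perm (R₁ R₂ : Rect m n) (p : Pos m n) :
    (R₁.spin * R₂.spin * R₁.spin).perm p = R₁.rotFun (R₂.rotFun (R₁.rotFun p)) := rfl

lemma conj_flip (R₁ R₂ : Rect m n) (p : Pos m n) :
    (R₁.spin * R₂.spin * R₁.spin).flip p =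
      (if R₁.Mem p then (1 : ZMod 2) else 0) + (if R₂.Mem (R₁.rotFun p) then 1 else 0)
        + (if R₁.Mem (R₂.rotFun (R₁.rotFun p)) then 1 else 0) := rfl

lemma mem_rot_iff (R : Rect m n) (p : Pos m n) : R.Mem (R.rotFun p) ↔ R.Mem p := by
  constructor
  · intro h
    by_contra hp
    rw [R.rotFun_of_not_mem p hp] at h; exact hp h
  · exact R.mem_rotFun p

lemma spin_sq (R : Rect m n) : R.spin * R.spin = 1 := by
  refine SpinElt.ext ?_ ?_
  · exact Equiv.ext fun p => R.rotFun_involutive p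
  · funext p
    show (if R.Mem p then (1:ZMod 2) else 0) + (if R.Mem (R.spinPerm⁻¹ p) then 1 else 0) = 0
    have e : R.spinPerm⁻¹ p = R.rotFun p := rfl
    rw [e]
    by_cases h : R.Mem p
    · rw [if_pos h, if_pos ((mem_rot_iff R p).2 h)]; decide
    · rw [if_neg h, if_neg (fun hc => h ((mem_rot_iff R p).1 hc))]; decide

lemma rect_eq_of (A B : Rect m n) (h1 : A.r1 = B.r1) (h2 : A.c1 = B.c1)
    (h3 : A.r2 = B.r2) (h4 : A.c2 = B.c2) : A = B := by
  cases A; cases B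
  simp only at h1 h2 h3 h4
  subst h1; subst h2; subst h3; subst h4
  rfl

end SpinAux
namespace SpinAux
variable {m n : ℕ}

lemma contains_eq (R₁ R₂ R₃ : Rect m n)
    (h1 : R₁.r1 ≤ R₂.r1) (h2 : R₂.r2 ≤ R₁.r2) (h3 : R₁.c1 ≤ R₂.c1) (h4 : R₂.c2 ≤ R₁.c2)
    (e1 : R₃.r1 = R₁.r1 + R₁.r2 - R₂.r2) (e2 : R₃.c1 = R₁.c1 + R₁.c2 - R₂.c2)
    (e3 : R₃.r2 = R₁.r1 + R₁.r2 - R₂.r1) (e4 : R₃.c2 = R₁.c1 + R₁.c2 - R₂.c1) :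
    R₁.spin * R₂.spin * R₁.spin = R₃.spin := by
  have gr := R₂.hr; have gc := R₂.hc
  have hsub : ∀ q : Pos m n, R₂.Mem q → R₁.Mem q := by
    rintro q ⟨v1, v2, v3, v4⟩
    exact ⟨by omega, by omega, by omega, by omega⟩
  have hsub3 : ∀ q : Pos m n, R₃.Mem q → R₁.Mem q := by
    rintro q ⟨v1, v2, v3, v4⟩
    exact ⟨by omega, by omega, by omega, by omega⟩
  have hiff : ∀ p : Pos m n, R₁.Mem p → (R₂.Mem (R₁.rotFun p) ↔ R₃.Mem p) := by
    intro p hp1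
    have f1 := R₁.rotFun_fst p hp1
    have f2 := R₁.rotFun_snd p hp1
    obtain ⟨w1, w2, w3, w4⟩ := hp1
    constructor
    · rintro ⟨u1, u2, u3, u4⟩
      exact ⟨by omega, by omega, by omega, by omega⟩
    · rintro ⟨u1, u2, u3, u4⟩
      exact ⟨by omega, by omega, by omega, by omega⟩
  refine SpinElt.ext (Equiv.ext fun p => ?_) (funext fun p => ?_)
  · show R₁.rotFun (R₂.rotFun (R₁.rotFun p)) = R₃.rotFun p
    by_cases hp1 : R₁.Mem p
    · by_cases hp2 : R₂.Mem (R₁.rotFun p)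
      · have f1 := R₁.rotFun_fst p hp1
        have f2 := R₁.rotFun_snd p hp1
        have g1 := R₂.rotFun_fst _ hp2
        have g2 := R₂.rotFun_snd _ hp2
        have hq2 : R₂.Mem (R₂.rotFun (R₁.rotFun p)) := R₂.mem_rotFun _ hp2
        have hq1 : R₁.Mem (R₂.rotFun (R₁.rotFun p)) := hsub _ hq2
        have k1 := R₁.rotFun_fst _ hq1
        have k2 := R₁.rotFun_snd _ hq1
        have hp3 : R₃.Mem p := (hiff p hp1).1 hp2
        have l1 := R₃.rotFun_fst p hp3
        have l2 := R₃.rotFun_snd p hp3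
        obtain ⟨w1, w2, w3, w4⟩ := hp1
        obtain ⟨u1, u2, u3, u4⟩ := hp2
        refine Prod.ext (Fin.ext ?_) (Fin.ext ?_) <;> omega
      · rw [R₂.rotFun_of_not_mem _ hp2, R₁.rotFun_involutive p]
        have hp3 : ¬ R₃.Mem p := fun hm => hp2 ((hiff p hp1).2 hm)
        rw [R₃.rotFun_of_not_mem p hp3]
    · have hp2 : ¬ R₂.Mem p := fun hm => hp1 (hsub p hm)
      have hp3 : ¬ R₃.Mem p := fun hm => hp1 (hsub3 p hm)
      rw [R₁.rotFun_of_not_mem p hp1, R₂.rotFun_of_not_mem p hp2,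
        R₁.rotFun_of_not_mem p hp1, R₃.rotFun_of_not_mem p hp3]
  · show (if R₁.Mem p then (1 : ZMod 2) else 0) + (if R₂.Mem (R₁.rotFun p) then 1 else 0)
        + (if R₁.Mem (R₂.rotFun (R₁.rotFun p)) then 1 else 0)
      = (if R₃.Mem p then 1 else 0)
    by_cases hp1 : R₁.Mem p
    · by_cases hp2 : R₂.Mem (R₁.rotFun p)
      · have hq1 : R₁.Mem (R₂.rotFun (R₁.rotFun p)) := hsub _ (R₂.mem_rotFun _ hp2)
        have hp3 : R₃.Mem p := (hiff p hp1).1 hp2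
        rw [if_pos hp1, if_pos hp2, if_pos hq1, if_pos hp3]; decide
      · have hp3 : ¬ R₃.Mem p := fun hm => hp2 ((hiff p hp1).2 hm)
        rw [R₂.rotFun_of_not_mem _ hp2]
        rw [if_pos hp1, if_neg hp2, if_pos (R₁.mem_rotFun p hp1), if_neg hp3]; decide
    · have hp2 : ¬ R₂.Mem p := fun hm => hp1 (hsub p hm)
      have hp3 : ¬ R₃.Mem p := fun hm => hp1 (hsub3 p hm)
      rw [R₁.rotFun_of_not_mem p hp1, R₂.rotFun_of_not_mem p hp2]
      rw [if_neg hp1, if_neg hp2, if_neg hp3]; decide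

lemma contains_case (R₁ R₂ : Rect m n) (hc : R₁.Contains R₂) :
    ∃ R₃ : Rect m n, R₁.spin * R₂.spin * R₁.spin = R₃.spin ∧ R₃.dims = R₂.dims := by
  obtain ⟨h1, h2, h3, h4⟩ := hc
  have a1 := R₁.hr; have a2 := R₁.hc; have a3 := R₁.hm; have a4 := R₁.hn
  have b1 := R₂.hr; have b2 := R₂.hc
  refine ⟨⟨R₁.r1 + R₁.r2 - R₂.r2, R₁.c1 + R₁.c2 - R₂.c2,
          R₁.r1 + R₁.r2 - R₂.r1, R₁.c1 + R₁.c2 - R₂.c1,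
          by omega, by omega, by omega, by omega⟩, ?_, ?_⟩
  · exact contains_eq R₁ R₂ _ h1 h2 h3 h4 rfl rfl rfl rfl
  · simp only [Rect.dims, Prod.mk.injEq]
    omega

end SpinAux
namespace SpinAux
variable {m n : ℕ}

lemma forward (R₁ R₂ R₃ : Rect m n) (h : R₁.spin * R₂.spin * R₁.spin = R₃.spin)
    (hnc : ¬ R₁.Contains R₂) : R₁.spin * R₂.spin = R₂.spin * R₁.spin := by
  have hflip : ∀ p : Pos m n,
      (if R₁.Mem p then (1 : ZMod 2) else 0) + (if R₂.Mem (R₁.rotFun p) then 1 else 0)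
        + (if R₁.Mem (R₂.rotFun (R₁.rotFun p)) then 1 else 0)
      = (if R₃.Mem p then 1 else 0) := by
    intro p; rw [← conj_flip R₁ R₂ p, h]; rfl
  have hperm : ∀ p : Pos m n, R₁.rotFun (R₂.rotFun (R₁.rotFun p)) = R₃.rotFun p := by
    intro p; rw [← conj_perm R₁ R₂ p, h]; rfl
  -- (★): the intersection is symmetric under the rotation of R₂
  have L2 : ∀ q : Pos m n, R₂.Mem q → (R₁.Mem q ↔ R₁.Mem (R₂.rotFun q)) := by
    intro q hq2
    by_cases hfx : R₂.rotFun q = q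
    · rw [hfx]
    constructor
    · intro hq1
      by_contra hq1'
      have e := hflip (R₁.rotFun q)
      rw [R₁.rotFun_involutive q] at e
      rw [if_pos (R₁.mem_rotFun q hq1), if_pos hq2, if_neg hq1'] at e
      have h3 : ¬ R₃.Mem (R₁.rotFun q) := by
        intro hm; rw [if_pos hm] at e; exact absurd e (by decide)
      have hpm := hperm (R₁.rotFun q)
      rw [R₁.rotFun_involutive q, R₃.rotFun_of_not_mem _ h3] at hpm
      exact hfx (R₁.rotFun_involutive.injective hpm)
    · intro hq1'
      by_contra hq1
      have e := hflip q
      rw [R₁.rotFun_of_not_mem q hq1] at e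
      rw [if_neg hq1, if_pos hq2, if_pos hq1'] at e
      have h3 : ¬ R₃.Mem q := by
        intro hm; rw [if_pos hm] at e; exact absurd e (by decide)
      have hpm := hperm q
      rw [R₁.rotFun_of_not_mem q hq1, R₃.rotFun_of_not_mem _ h3] at hpm
      have h5 := congrArg R₁.rotFun hpm
      rw [R₁.rotFun_involutive] at h5
      rw [R₁.rotFun_of_not_mem q hq1] at h5
      exact hfx h5
  -- membership in R₃ is membership of the ρ₁-image in R₂
  have L3 : ∀ p : Pos m n, R₃.Mem p ↔ R₂.Mem (R₁.rotFun p) := by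
    intro p
    have hAB : R₁.Mem p ↔ R₁.Mem (R₂.rotFun (R₁.rotFun p)) := by
      by_cases h2 : R₂.Mem (R₁.rotFun p)
      · exact (mem_rot_iff R₁ p).symm.trans (L2 _ h2)
      · rw [R₂.rotFun_of_not_mem _ h2]
        exact (mem_rot_iff R₁ p).symm
    have e := hflip p
    by_cases hA : R₁.Mem p
    · have hA' := hAB.1 hA
      rw [if_pos hA, if_pos hA'] at e
      by_cases hB : R₂.Mem (R₁.rotFun p)
      · rw [if_pos hB] at e
        refine ⟨fun _ => hB, fun _ => ?_⟩
        by_contra h3; rw [if_neg h3] at e; exact absurd e (by decide)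
      · rw [if_neg hB] at e
        refine ⟨fun h3 => ?_, fun hb => absurd hb hB⟩
        rw [if_pos h3] at e; exact absurd e (by decide)
    · have hA' : ¬ R₁.Mem (R₂.rotFun (R₁.rotFun p)) := fun hx => hA (hAB.2 hx)
      rw [if_neg hA, if_neg hA'] at e
      by_cases hB : R₂.Mem (R₁.rotFun p)
      · rw [if_pos hB] at e
        refine ⟨fun _ => hB, fun _ => ?_⟩
        by_contra h3; rw [if_neg h3] at e; exact absurd e (by decide)
      · rw [if_neg hB] at e
        refine ⟨fun h3 => ?_, fun hb => absurd hb hB⟩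
        rw [if_pos h3] at e; exact absurd e (by decide)
  -- ρ₁ maps R₂ into R₂
  have L4 : ∀ p : Pos m n, R₂.Mem (R₁.rotFun p) → R₂.Mem p := by
    intro p₀ hm0
    by_contra hn0
    have hp1 : R₁.Mem p₀ := by
      by_contra hx
      rw [R₁.rotFun_of_not_mem p₀ hx] at hm0
      exact hn0 hm0
    have hq₁R₁ : R₁.Mem (R₁.rotFun p₀) := R₁.mem_rotFun p₀ hp1
    obtain ⟨i1, i2, i3, i4⟩ := hq₁R₁
    have hm0' := hm0
    obtain ⟨j1, j2, j3, j4⟩ := hm0'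
    have hhm := R₁.hm; have hhn := R₁.hn; have hhr := R₁.hr; have hhc := R₁.hc
    have gm := R₂.hm; have gn := R₂.hn; have gr := R₂.hr; have gc := R₂.hc
    have corner : ∀ (x y : ℕ) (hx : x < m) (hy : y < n),
        R₂.Mem (⟨x, hx⟩, ⟨y, hy⟩) → R₁.Mem (⟨x, hx⟩, ⟨y, hy⟩) →
        R₁.r1 ≤ R₂.r1 + R₂.r2 - x ∧ R₂.r1 + R₂.r2 - x ≤ R₁.r2 ∧
        R₁.c1 ≤ R₂.c1 + R₂.c2 - y ∧ R₂.c1 + R₂.c2 - y ≤ R₁.c2 := by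
      intro x y hx hy hm2 hm1
      have hrm := (L2 _ hm2).1 hm1
      have e1' : ((R₂.rotFun (⟨x, hx⟩, ⟨y, hy⟩)).1 : ℕ) = R₂.r1 + R₂.r2 - x :=
        R₂.rotFun_fst _ hm2
      have e2' : ((R₂.rotFun (⟨x, hx⟩, ⟨y, hy⟩)).2 : ℕ) = R₂.c1 + R₂.c2 - y :=
        R₂.rotFun_snd _ hm2
      obtain ⟨k1, k2, k3, k4⟩ := hrm
      exact ⟨by omega, by omega, by omega, by omega⟩
    have hx1 : max R₁.r1 R₂.r1 < m := by omega
    have hy1 : max R₁.c1 R₂.c1 < n := by omega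
    have hx2 : min R₁.r2 R₂.r2 < m := by omega
    have hy2 : min R₁.c2 R₂.c2 < n := by omega
    have C1 := corner _ _ hx1 hy1
      ⟨show R₂.r1 ≤ max R₁.r1 R₂.r1 by omega, show max R₁.r1 R₂.r1 ≤ R₂.r2 by omega,
       show R₂.c1 ≤ max R₁.c1 R₂.c1 by omega, show max R₁.c1 R₂.c1 ≤ R₂.c2 by omega⟩
      ⟨show R₁.r1 ≤ max R₁.r1 R₂.r1 by omega, show max R₁.r1 R₂.r1 ≤ R₁.r2 by omega,
       show R₁.c1 ≤ max R₁.c1 R₂.c1 by omega, show max R₁.c1 R₂.c1 ≤ R₁.c2 by omega⟩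
    have C2 := corner _ _ hx2 hy2
      ⟨show R₂.r1 ≤ min R₁.r2 R₂.r2 by omega, show min R₁.r2 R₂.r2 ≤ R₂.r2 by omega,
       show R₂.c1 ≤ min R₁.c2 R₂.c2 by omega, show min R₁.c2 R₂.c2 ≤ R₂.c2 by omega⟩
      ⟨show R₁.r1 ≤ min R₁.r2 R₂.r2 by omega, show min R₁.r2 R₂.r2 ≤ R₁.r2 by omega,
       show R₁.c1 ≤ min R₁.c2 R₂.c2 by omega, show min R₁.c2 R₂.c2 ≤ R₁.c2 by omega⟩
    have hrow : max R₁.r1 R₂.r1 + min R₁.r2 R₂.r2 = R₂.r1 + R₂.r2 := by omega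
    have hcol : max R₁.c1 R₂.c1 + min R₁.c2 R₂.c2 = R₂.c1 + R₂.c2 := by omega
    have hD : (R₂.r1 < R₁.r1 ∧ R₁.r2 < R₂.r2) ∨ (R₂.c1 < R₁.c1 ∧ R₁.c2 < R₂.c2) := by
      simp only [Rect.Contains] at hnc
      omega
    have key : ∀ (x y : ℕ) (hx : x < m) (hy : y < n),
        R₂.Mem (⟨x, hx⟩, ⟨y, hy⟩) → ¬ R₁.Mem (⟨x, hx⟩, ⟨y, hy⟩) →
        R₃.Mem (⟨x, hx⟩, ⟨y, hy⟩) := by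
      intro x y hx hy hm2 hm1
      refine (L3 _).2 ?_
      rw [R₁.rotFun_of_not_mem _ hm1]
      exact hm2
    have hA := key R₂.r1 R₂.c1 (by omega) (by omega)
      ⟨le_refl R₂.r1, gr, le_refl R₂.c1, gc⟩
      (fun hmem => by
        have hx : R₁.r1 ≤ R₂.r1 ∧ R₂.r1 ≤ R₁.r2 ∧ R₁.c1 ≤ R₂.c1 ∧ R₂.c1 ≤ R₁.c2 := hmem
        omega)
    have hB := key R₂.r2 R₂.c2 (by omega) (by omega)
      ⟨gr, le_refl R₂.r2, gc, le_refl R₂.c2⟩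
      (fun hmem => by
        have hx : R₁.r1 ≤ R₂.r2 ∧ R₂.r2 ≤ R₁.r2 ∧ R₁.c1 ≤ R₂.c2 ∧ R₂.c2 ≤ R₁.c2 := hmem
        omega)
    have t1 : R₃.r1 ≤ R₂.r1 ∧ R₂.r1 ≤ R₃.r2 ∧ R₃.c1 ≤ R₂.c1 ∧ R₂.c1 ≤ R₃.c2 := hA
    have t2 : R₃.r1 ≤ R₂.r2 ∧ R₂.r2 ≤ R₃.r2 ∧ R₃.c1 ≤ R₂.c2 ∧ R₂.c2 ≤ R₃.c2 := hB
    obtain ⟨t11, t12, t13, t14⟩ := t1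
    obtain ⟨t21, t22, t23, t24⟩ := t2
    have hq₃ : R₃.Mem (R₁.rotFun p₀) := ⟨by omega, by omega, by omega, by omega⟩
    have hfin := (L3 _).1 hq₃
    rw [R₁.rotFun_involutive p₀] at hfin
    exact hn0 hfin
  have L5 : ∀ p : Pos m n, R₂.Mem (R₁.rotFun p) ↔ R₂.Mem p :=
    fun p => ⟨L4 p, fun hp => L4 (R₁.rotFun p) (by rw [R₁.rotFun_involutive p]; exact hp)⟩
  have m23 : ∀ p : Pos m n, R₃.Mem p ↔ R₂.Mem p := fun p => (L3 p).trans (L5 p)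
  -- R₃ = R₂
  have gm := R₂.hm; have gn := R₂.hn; have gr := R₂.hr; have gc := R₂.hc
  have fm := R₃.hm; have fn := R₃.hn; have fr := R₃.hr; have fc := R₃.hc
  have cA : R₃.r1 ≤ R₂.r1 ∧ R₂.r1 ≤ R₃.r2 ∧ R₃.c1 ≤ R₂.c1 ∧ R₂.c1 ≤ R₃.c2 :=
    (m23 ((⟨R₂.r1, by omega⟩ : Fin m), (⟨R₂.c1, by omega⟩ : Fin n))).2
      ⟨le_refl R₂.r1, gr, le_refl R₂.c1, gc⟩
  have cB : R₃.r1 ≤ R₂.r2 ∧ R₂.r2 ≤ R₃.r2 ∧ R₃.c1 ≤ R₂.c2 ∧ R₂.c2 ≤ R₃.c2 :=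
    (m23 ((⟨R₂.r2, by omega⟩ : Fin m), (⟨R₂.c2, by omega⟩ : Fin n))).2
      ⟨gr, le_refl R₂.r2, gc, le_refl R₂.c2⟩
  have cC : R₂.r1 ≤ R₃.r1 ∧ R₃.r1 ≤ R₂.r2 ∧ R₂.c1 ≤ R₃.c1 ∧ R₃.c1 ≤ R₂.c2 :=
    (m23 ((⟨R₃.r1, by omega⟩ : Fin m), (⟨R₃.c1, by omega⟩ : Fin n))).1
      ⟨le_refl R₃.r1, fr, le_refl R₃.c1, fc⟩
  have cD : R₂.r1 ≤ R₃.r2 ∧ R₃.r2 ≤ R₂.r2 ∧ R₂.c1 ≤ R₃.c2 ∧ R₃.c2 ≤ R₂.c2 :=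
    (m23 ((⟨R₃.r2, by omega⟩ : Fin m), (⟨R₃.c2, by omega⟩ : Fin n))).1
      ⟨fr, le_refl R₃.r2, fc, le_refl R₃.c2⟩
  have hR : R₃ = R₂ := by
    obtain ⟨d1, d2, d3, d4⟩ := cA
    obtain ⟨d5, d6, d7, d8⟩ := cB
    obtain ⟨d9, d10, d11, d12⟩ := cC
    obtain ⟨d13, d14, d15, d16⟩ := cD
    exact rect_eq_of R₃ R₂ (by omega) (by omega) (by omega) (by omega)
  rw [hR] at h
  have hfin : R₁.spin * R₂.spin * R₁.spin * R₁.spin = R₂.spin * R₁.spin := by rw [h]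
  rw [mul_assoc, spin_sq, mul_one] at hfin
  exact hfin

end SpinAux

/-- `s₁s₂s₁` is a spin iff `s₁` and `s₂` commute or `R₁` contains `R₂`; in the latter
case the rectangle of `s₁s₂s₁` has the same dimensions (shape) as `R₂`. -/
theorem stmt5 (m n : ℕ) (R₁ R₂ : Rect m n) :
    (IsSpin (R₁.spin * R₂.spin * R₁.spin) ↔
      (R₁.spin * R₂.spin = R₂.spin * R₁.spin ∨ R₁.Contains R₂)) ∧
    (R₁.Contains R₂ →
      ∃ R₃ : Rect m n, R₁.spin * R₂.spin * R₁.spin = R₃.spin ∧ R₃.dims = R₂.dims) := by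
  constructor
  · constructor
    · rintro ⟨R₃, h3⟩
      by_cases hc : R₁.Contains R₂
      · exact Or.inr hc
      · exact Or.inl (SpinAux.forward R₁ R₂ R₃ h3 hc)
    · rintro (hcomm | hc)
      · refine ⟨R₂, ?_⟩
        rw [hcomm, mul_assoc, SpinAux.spin_sq, mul_one]
      · obtain ⟨R₃, hh, _⟩ := SpinAux.contains_case R₁ R₂ hc
        exact ⟨R₃, hh⟩
  · exact SpinAux.contains_case R₁ R₂
end

section
/- The set of 1×1 spins together with the set of 1×2 and 2×1 spins generates the full group Spin_{m×n} = ℤ/2ℤ ≀ S_{mn}. -/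
section Aux

open Equiv

variable {m n : ℕ}

/-- The generating set of small spins. -/
def genSet (m n : ℕ) : Set (SpinElt m n) :=
  {s : SpinElt m n | ∃ R : Rect m n, s = R.spin ∧
      (R.dims = (1, 1) ∨ R.dims = (1, 2) ∨ R.dims = (2, 1))}

/-- The subgroup generated by small spins. -/
def GG (m n : ℕ) : Subgroup (SpinElt m n) := Subgroup.closure (genSet m n)

/-- The 1×1 rectangle at `p`. -/
def oneByOne (p : Pos m n) : Rect m n :=
  ⟨p.1, p.2, p.1, p.2, le_rfl, le_rfl, p.1.isLt, p.2.isLt⟩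

lemma oneByOne_mem (p q : Pos m n) : (oneByOne p).Mem q ↔ q = p := by
  simp only [oneByOne, Rect.Mem, Prod.ext_iff, Fin.ext_iff]
  omega

lemma oneByOne_spin (p : Pos m n) :
    (oneByOne p).spin = ⟨1, fun q => if q = p then 1 else 0⟩ := by
  refine SpinElt.ext ?_ ?_
  · refine Equiv.ext fun q => ?_
    show (oneByOne p).rotFun q = (1 : Equiv.Perm (Pos m n)) q
    rw [Equiv.Perm.one_apply]
    by_cases h : (oneByOne p).Mem q
    · have h' := (oneByOne_mem p q).mp h
      subst h'
      refine Prod.ext (Fin.ext ?_) (Fin.ext ?_)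
      · rw [Rect.rotFun_fst _ _ h]; simp [oneByOne]
      · rw [Rect.rotFun_snd _ _ h]; simp [oneByOne]
    · exact Rect.rotFun_of_not_mem _ _ h
  · funext q
    simp [Rect.spin, oneByOne_mem]

lemma single_flip_mem (p : Pos m n) :
    (⟨1, fun q => if q = p then 1 else 0⟩ : SpinElt m n) ∈ GG m n := by
  rw [← oneByOne_spin]
  exact Subgroup.subset_closure ⟨oneByOne p, rfl, Or.inl (by simp only [oneByOne, Rect.dims, Prod.mk.injEq]; omega)⟩

lemma flip_indicator_mem (s : Finset (Pos m n)) (f : Pos m n → ZMod 2) :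
    (⟨1, fun q => if q ∈ s then f q else 0⟩ : SpinElt m n) ∈ GG m n := by
  classical
  induction s using Finset.induction_on with
  | empty =>
      have : (⟨1, fun q => if q ∈ (∅ : Finset (Pos m n)) then f q else 0⟩ : SpinElt m n) = 1 := by
        refine SpinElt.ext rfl ?_
        funext q; simp
      rw [this]; exact one_mem _
  | @insert a s ha ih =>
      have key : (⟨1, fun q => if q ∈ insert a s then f q else 0⟩ : SpinElt m n)
          = (⟨1, fun q => if q = a then f a else 0⟩ : SpinElt m n) *
            ⟨1, fun q => if q ∈ s then f q else 0⟩ := by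
        refine SpinElt.ext (by simp) ?_
        funext q
        show _ = (if q = a then f a else 0) + (if (1 : Perm (Pos m n))⁻¹ q ∈ s then f _ else 0)
        simp only [inv_one, Perm.one_apply]
        by_cases hq : q = a
        · subst hq; simp [ha]
        · simp [hq, Finset.mem_insert]
      rw [key]
      refine mul_mem ?_ ih
      have hfa : f a = 0 ∨ f a = 1 := by
        have : ∀ c : ZMod 2, c = 0 ∨ c = 1 := by decide
        exact this (f a)
      rcases hfa with h0 | h1
      · have : (⟨1, fun q => if q = a then f a else 0⟩ : SpinElt m n) = 1 := by
          refine SpinElt.ext rfl ?_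
          funext q; simp [h0]
        rw [this]; exact one_mem _
      · rw [show (fun q => if q = a then f a else 0) = (fun q => if q = a then (1 : ZMod 2) else 0)
            from funext fun q => by rw [h1]]
        exact single_flip_mem a

lemma flip_mem (f : Pos m n → ZMod 2) : (⟨1, f⟩ : SpinElt m n) ∈ GG m n := by
  classical
  have := flip_indicator_mem (Finset.univ : Finset (Pos m n)) f
  simpa using this

/-- The pure-permutation homomorphism into `SpinElt`. -/
def permHom : Perm (Pos m n) →* SpinElt m n where
  toFun σ := ⟨σ, 0⟩
  map_one' := rfl
  map_mul' σ τ := by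
    refine SpinElt.ext rfl ?_
    funext q
    show (0 : ZMod 2) = 0 + 0
    simp

lemma adj_spin_mem {R : Rect m n} {p q : Pos m n} (hpq : p ≠ q)
    (hRmem : ∀ x, R.Mem x ↔ x = p ∨ x = q)
    (hRperm : ∀ x, R.rotFun x = Equiv.swap p q x)
    (hgen : R.spin ∈ genSet m n) :
    permHom (Equiv.swap p q) ∈ GG m n := by
  classical
  have hspin : R.spin = ⟨Equiv.swap p q, fun x => if x = p ∨ x = q then 1 else 0⟩ := by
    refine SpinElt.ext ?_ ?_
    · refine Equiv.ext fun x => ?_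
      exact hRperm x
    · funext x; simp [Rect.spin, hRmem]
  have key : permHom (Equiv.swap p q)
      = R.spin * ⟨1, fun x => if x = p ∨ x = q then 1 else 0⟩ := by
    rw [hspin]
    refine SpinElt.ext (by simp [permHom]) ?_
    funext x
    show (0 : ZMod 2) = (if x = p ∨ x = q then 1 else 0) +
      (if (Equiv.swap p q)⁻¹ x = p ∨ (Equiv.swap p q)⁻¹ x = q then 1 else 0)
    have hiff : ((Equiv.swap p q)⁻¹ x = p ∨ (Equiv.swap p q)⁻¹ x = q) ↔ (x = p ∨ x = q) := by
      rw [Equiv.swap_inv]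
      constructor
      · rintro (h | h)
        · right
          have := congrArg (Equiv.swap p q) h
          rwa [Equiv.swap_apply_self, Equiv.swap_apply_left] at this
        · left
          have := congrArg (Equiv.swap p q) h
          rwa [Equiv.swap_apply_self, Equiv.swap_apply_right] at this
      · rintro (h | h)
        · subst h; right; simp [Equiv.swap_apply_left]
        · subst h; left; simp [Equiv.swap_apply_right]
    by_cases hx : x = p ∨ x = q
    · rw [if_pos hx, if_pos (hiff.mpr hx)]; decide
    · rw [if_neg hx, if_neg (fun h => hx (hiff.mp h))]; decide
  rw [key]
  exact mul_mem (Subgroup.subset_closure hgen) (flip_mem _)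

/-- Horizontal 1×2 rectangle at `p` (needs `p.2 + 1 < n`). -/
def horizRect (p : Pos m n) (h : p.2.val + 1 < n) : Rect m n :=
  ⟨p.1, p.2, p.1, p.2.val + 1, le_rfl, Nat.le_succ _, p.1.isLt, h⟩

/-- Vertical 2×1 rectangle at `p` (needs `p.1 + 1 < m`). -/
def vertRect (p : Pos m n) (h : p.1.val + 1 < m) : Rect m n :=
  ⟨p.1, p.2, p.1.val + 1, p.2, Nat.le_succ _, le_rfl, h, p.2.isLt⟩

lemma horiz_swap_mem (p : Pos m n) (h : p.2.val + 1 < n) :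
    permHom (Equiv.swap p (p.1, ⟨p.2.val + 1, h⟩)) ∈ GG m n := by
  set q : Pos m n := (p.1, ⟨p.2.val + 1, h⟩) with hq
  have hpq : p ≠ q := by
    simp only [hq, ne_eq, Prod.ext_iff, Fin.ext_iff]
    omega
  have hRmem : ∀ x, (horizRect p h).Mem x ↔ x = p ∨ x = q := by
    intro x
    simp only [horizRect, Rect.Mem, hq, Prod.ext_iff, Fin.ext_iff, Fin.val_mk]
    omega
  refine adj_spin_mem hpq hRmem ?_ ?_
  · intro x
    by_cases hx : (horizRect p h).Mem x
    · rcases (hRmem x).mp hx with h1 | h1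
      · subst h1
        rw [Equiv.swap_apply_left]
        refine Prod.ext (Fin.ext ?_) (Fin.ext ?_)
        · rw [Rect.rotFun_fst _ _ hx]; simp only [horizRect, hq]; omega
        · rw [Rect.rotFun_snd _ _ hx]; simp only [horizRect, hq]; omega
      · subst h1
        rw [Equiv.swap_apply_right]
        refine Prod.ext (Fin.ext ?_) (Fin.ext ?_)
        · rw [Rect.rotFun_fst _ _ hx]; simp only [horizRect, hq]; omega
        · rw [Rect.rotFun_snd _ _ hx]; simp only [horizRect, hq]; omega
    · rw [Rect.rotFun_of_not_mem _ _ hx]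
      rw [Equiv.swap_apply_of_ne_of_ne (fun hc => hx ((hRmem x).mpr (Or.inl hc)))
        (fun hc => hx ((hRmem x).mpr (Or.inr hc)))]
  · exact ⟨horizRect p h, rfl, Or.inr (Or.inl (by simp only [horizRect, Rect.dims, Prod.mk.injEq]; omega))⟩

lemma vert_swap_mem (p : Pos m n) (h : p.1.val + 1 < m) :
    permHom (Equiv.swap p (⟨p.1.val + 1, h⟩, p.2)) ∈ GG m n := by
  set q : Pos m n := (⟨p.1.val + 1, h⟩, p.2) with hq
  have hpq : p ≠ q := by
    simp only [hq, ne_eq, Prod.ext_iff, Fin.ext_iff]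
    omega
  have hRmem : ∀ x, (vertRect p h).Mem x ↔ x = p ∨ x = q := by
    intro x
    simp only [vertRect, Rect.Mem, hq, Prod.ext_iff, Fin.ext_iff, Fin.val_mk]
    omega
  refine adj_spin_mem hpq hRmem ?_ ?_
  · intro x
    by_cases hx : (vertRect p h).Mem x
    · rcases (hRmem x).mp hx with h1 | h1
      · subst h1
        rw [Equiv.swap_apply_left]
        refine Prod.ext (Fin.ext ?_) (Fin.ext ?_)
        · rw [Rect.rotFun_fst _ _ hx]; simp only [vertRect, hq]; omega
        · rw [Rect.rotFun_snd _ _ hx]; simp only [vertRect, hq]; omega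
      · subst h1
        rw [Equiv.swap_apply_right]
        refine Prod.ext (Fin.ext ?_) (Fin.ext ?_)
        · rw [Rect.rotFun_fst _ _ hx]; simp only [vertRect, hq]; omega
        · rw [Rect.rotFun_snd _ _ hx]; simp only [vertRect, hq]; omega
    · rw [Rect.rotFun_of_not_mem _ _ hx]
      rw [Equiv.swap_apply_of_ne_of_ne (fun hc => hx ((hRmem x).mpr (Or.inl hc)))
        (fun hc => hx ((hRmem x).mpr (Or.inr hc)))]
  · exact ⟨vertRect p h, rfl, Or.inr (Or.inr (by simp only [vertRect, Rect.dims, Prod.mk.injEq]; omega))⟩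

/-- Conjugation step: transfer a swap through an adjacent swap. -/
lemma conj_step {α : Type*} [DecidableEq α] (H : Subgroup (Perm α)) {p a q : α}
    (hp1 : p ≠ a) (hp2 : p ≠ q)
    (h1 : Equiv.swap a q ∈ H) (h2 : Equiv.swap p a ∈ H) : Equiv.swap p q ∈ H := by
  have key : Equiv.swap p q = Equiv.swap a q * Equiv.swap p a * (Equiv.swap a q)⁻¹ := by
    rw [← Equiv.swap_apply_apply]
    congr 1
    · exact (Equiv.swap_apply_of_ne_of_ne hp1 hp2).symm
    · exact (Equiv.swap_apply_left a q).symm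
  rw [key]
  exact mul_mem (mul_mem h1 h2) (inv_mem h1)

lemma horiz_swap_mem' {r c c' : ℕ} (hc : c + 1 < n) (hr : r < m) (hc' : c' < n)
    (e : c' = c + 1) :
    permHom (Equiv.swap ((⟨r, hr⟩ : Fin m), (⟨c, by omega⟩ : Fin n)) (⟨r, hr⟩, ⟨c', hc'⟩))
      ∈ GG m n := by
  subst e
  exact horiz_swap_mem ((⟨r, hr⟩ : Fin m), (⟨c, by omega⟩ : Fin n)) hc

lemma vert_swap_mem' {r c r' : ℕ} (hr : r + 1 < m) (hc : c < n) (hr' : r' < m)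
    (e : r' = r + 1) :
    permHom (Equiv.swap ((⟨r, by omega⟩ : Fin m), (⟨c, hc⟩ : Fin n)) (⟨r', hr'⟩, ⟨c, hc⟩))
      ∈ GG m n := by
  subst e
  exact vert_swap_mem ((⟨r, by omega⟩ : Fin m), (⟨c, hc⟩ : Fin n)) hr

lemma swap_mem_aux :
    ∀ d : ℕ, ∀ pr pc qr qc : ℕ, ∀ (h1 : pr < m) (h2 : pc < n) (h3 : qr < m) (h4 : qc < n),
      (pr - qr) + (qr - pr) + (pc - qc) + (qc - pc) ≤ d →
      Equiv.swap ((⟨pr, h1⟩ : Fin m), (⟨pc, h2⟩ : Fin n)) (⟨qr, h3⟩, ⟨qc, h4⟩)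
        ∈ (GG m n).comap (permHom (m := m) (n := n)) := by
  intro d
  induction d with
  | zero =>
      intro pr pc qr qc h1 h2 h3 h4 hd
      have hr : pr = qr := by omega
      have hc : pc = qc := by omega
      subst hr; subst hc
      rw [Equiv.swap_self]; exact one_mem _
  | succ d ih =>
      intro pr pc qr qc h1 h2 h3 h4 hd
      by_cases hpq : pr = qr ∧ pc = qc
      · obtain ⟨e1, e2⟩ := hpq
        subst e1; subst e2
        rw [Equiv.swap_self]; exact one_mem _
      · have hp2 : ((⟨pr, h1⟩ : Fin m), (⟨pc, h2⟩ : Fin n)) ≠ (⟨qr, h3⟩, ⟨qc, h4⟩) := by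
          simp only [ne_eq, Prod.mk.injEq, Fin.mk.injEq]
          exact hpq
        rcases Nat.lt_trichotomy pr qr with h | h | h
        · -- pr < qr : move q up to a = (qr-1, qc)
          have ha1 : qr - 1 < m := by omega
          have hadj : Equiv.swap ((⟨qr - 1, ha1⟩ : Fin m), (⟨qc, h4⟩ : Fin n)) (⟨qr, h3⟩, ⟨qc, h4⟩)
              ∈ (GG m n).comap (permHom (m := m) (n := n)) :=
            Subgroup.mem_comap.mpr (vert_swap_mem' (by omega) h4 h3 (by omega))
          by_cases hpa : pr = qr - 1 ∧ pc = qc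
          · have e : ((⟨pr, h1⟩ : Fin m), (⟨pc, h2⟩ : Fin n))
                = ((⟨qr - 1, ha1⟩ : Fin m), (⟨qc, h4⟩ : Fin n)) := by
              simp only [Prod.mk.injEq, Fin.mk.injEq]
              exact hpa
            rw [e]; exact hadj
          · refine conj_step _ ?_ hp2 hadj (ih pr pc (qr - 1) qc h1 h2 ha1 h4 (by omega))
            simp only [ne_eq, Prod.mk.injEq, Fin.mk.injEq]
            exact hpa
        · -- pr = qr : move in columns
          subst h
          rcases Nat.lt_trichotomy pc qc with h | h | h
          · have ha2 : qc - 1 < n := by omega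
            have hadj : Equiv.swap ((⟨pr, h3⟩ : Fin m), (⟨qc - 1, ha2⟩ : Fin n)) (⟨pr, h3⟩, ⟨qc, h4⟩)
                ∈ (GG m n).comap (permHom (m := m) (n := n)) :=
              Subgroup.mem_comap.mpr (horiz_swap_mem' (by omega) h3 h4 (by omega))
            by_cases hpa : pc = qc - 1
            · have e : ((⟨pr, h1⟩ : Fin m), (⟨pc, h2⟩ : Fin n))
                  = ((⟨pr, h3⟩ : Fin m), (⟨qc - 1, ha2⟩ : Fin n)) := by
                simp only [Prod.mk.injEq, Fin.mk.injEq]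
                exact ⟨trivial, hpa⟩
              rw [e]; exact hadj
            · refine conj_step _ ?_ hp2 hadj (ih pr pc pr (qc - 1) h1 h2 h3 ha2 (by omega))
              simp only [ne_eq, Prod.mk.injEq, Fin.mk.injEq]
              rintro ⟨-, hc⟩
              exact hpa hc
          · exact absurd ⟨rfl, h⟩ hpq
          · have ha2 : qc + 1 < n := by omega
            have hadj : Equiv.swap ((⟨pr, h3⟩ : Fin m), (⟨qc + 1, ha2⟩ : Fin n)) (⟨pr, h3⟩, ⟨qc, h4⟩)
                ∈ (GG m n).comap (permHom (m := m) (n := n)) := by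
              rw [Equiv.swap_comm]
              exact Subgroup.mem_comap.mpr (horiz_swap_mem' ha2 h3 ha2 rfl)
            by_cases hpa : pc = qc + 1
            · have e : ((⟨pr, h1⟩ : Fin m), (⟨pc, h2⟩ : Fin n))
                  = ((⟨pr, h3⟩ : Fin m), (⟨qc + 1, ha2⟩ : Fin n)) := by
                simp only [Prod.mk.injEq, Fin.mk.injEq]
                exact ⟨trivial, hpa⟩
              rw [e]; exact hadj
            · refine conj_step _ ?_ hp2 hadj (ih pr pc pr (qc + 1) h1 h2 h3 ha2 (by omega))
              simp only [ne_eq, Prod.mk.injEq, Fin.mk.injEq]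
              rintro ⟨-, hc⟩
              exact hpa hc
        · -- qr < pr : move q down to a = (qr+1, qc)
          have ha1 : qr + 1 < m := by omega
          have hadj : Equiv.swap ((⟨qr + 1, ha1⟩ : Fin m), (⟨qc, h4⟩ : Fin n)) (⟨qr, h3⟩, ⟨qc, h4⟩)
              ∈ (GG m n).comap (permHom (m := m) (n := n)) := by
            rw [Equiv.swap_comm]
            exact Subgroup.mem_comap.mpr (vert_swap_mem' ha1 h4 ha1 rfl)
          by_cases hpa : pr = qr + 1 ∧ pc = qc
          · have e : ((⟨pr, h1⟩ : Fin m), (⟨pc, h2⟩ : Fin n))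
                = ((⟨qr + 1, ha1⟩ : Fin m), (⟨qc, h4⟩ : Fin n)) := by
              simp only [Prod.mk.injEq, Fin.mk.injEq]
              exact hpa
            rw [e]; exact hadj
          · refine conj_step _ ?_ hp2 hadj (ih pr pc (qr + 1) qc h1 h2 ha1 h4 (by omega))
            simp only [ne_eq, Prod.mk.injEq, Fin.mk.injEq]
            exact hpa

lemma perm_mem (σ : Perm (Pos m n)) : permHom σ ∈ GG m n := by
  classical
  have hH : ∀ τ : Perm (Pos m n), τ.IsSwap → τ ∈ (GG m n).comap (permHom (m := m) (n := n)) := by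
    rintro τ ⟨⟨⟨pr, hh1⟩, ⟨pc, hh2⟩⟩, ⟨⟨qr, hh3⟩, ⟨qc, hh4⟩⟩, -, rfl⟩
    exact swap_mem_aux _ pr pc qr qc hh1 hh2 hh3 hh4 le_rfl
  have : (GG m n).comap (permHom (m := m) (n := n)) = ⊤ := by
    rw [eq_top_iff, ← Equiv.Perm.closure_isSwap, Subgroup.closure_le]
    intro τ hτ
    exact hH τ hτ
  have hmem : σ ∈ (GG m n).comap (permHom (m := m) (n := n)) := by
    rw [this]; trivial
  exact hmem

end Aux

/-- The `1×1` spins together with the `1×2` and `2×1` spins generate all of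
`Spin_{m×n}`. -/
theorem stmt10 (m n : ℕ) :
    Subgroup.closure {s : SpinElt m n | ∃ R : Rect m n, s = R.spin ∧
      (R.dims = (1, 1) ∨ R.dims = (1, 2) ∨ R.dims = (2, 1))} = ⊤ := by
  show GG m n = ⊤
  rw [eq_top_iff]
  rintro ⟨σ, f⟩ -
  have key : (⟨σ, f⟩ : SpinElt m n) = permHom σ * ⟨1, fun p => f (σ p)⟩ := by
    refine SpinElt.ext (by simp [permHom]) ?_
    funext p
    show f p = 0 + f (σ (σ⁻¹ p))
    simp
  rw [key]
  exact mul_mem (perm_mem σ) (flip_mem _)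
end

section
/- Every element of Spin_{m×n} can be expressed as a product of at most 3mn − (m+n) spins. -/
namespace SpinProof

variable {m n : ℕ}

/-- linear index of a cell: column-major, bottom-up within a column. -/
def idx (p : Pos m n) : ℕ := (m - 1 - p.1.val) + p.2.val * m

lemma idx_lt (hm : 0 < m) (p : Pos m n) : idx p < m * n := by
  have h1 : p.1.val < m := p.1.isLt
  have h2 : p.2.val < n := p.2.isLt
  have h3 : p.2.val * m + m ≤ n * m := by
    have := Nat.mul_le_mul_right m (Nat.succ_le_of_lt h2)
    simpa [Nat.succ_mul] using this
  have h4 : idx p < p.2.val * m + m := by unfold idx; omega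
  have h5 := h4.trans_le h3
  rw [Nat.mul_comm] at h5
  exact h5

lemma idx_inj (p q : Pos m n) (hm : 0 < m) (h : idx p = idx q) : p = q := by
  unfold idx at h
  have hp1 : p.1.val < m := p.1.isLt
  have hq1 : q.1.val < m := q.1.isLt
  have hd1 : m - 1 - p.1.val < m := by omega
  have hd2 : m - 1 - q.1.val < m := by omega
  have hc : p.2.val = q.2.val := by
    have e1 : ((m - 1 - p.1.val) + p.2.val * m) / m = p.2.val := by
      rw [Nat.add_mul_div_right _ _ hm, Nat.div_eq_of_lt hd1]; omega
    have e2 : ((m - 1 - q.1.val) + q.2.val * m) / m = q.2.val := by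
      rw [Nat.add_mul_div_right _ _ hm, Nat.div_eq_of_lt hd2]; omega
    rw [← e1, ← e2, h]
  have hr : p.1.val = q.1.val := by
    rw [hc] at h; omega
  exact Prod.ext (Fin.ext hr) (Fin.ext hc)

/-- `Supp s k` : `s` does not touch any cell with index `< k`. -/
def Supp (s : SpinElt m n) (k : ℕ) : Prop :=
  ∀ w : Pos m n, idx w < k → s.perm w = w ∧ s.flip w = 0

lemma Supp.one (k : ℕ) : Supp (1 : SpinElt m n) k := by
  intro w _; simp

lemma Supp.mul {a b : SpinElt m n} {k : ℕ} (ha : Supp a k) (hb : Supp b k) :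
    Supp (a * b) k := by
  intro w hw
  obtain ⟨ha1, ha2⟩ := ha w hw
  obtain ⟨hb1, hb2⟩ := hb w hw
  have hainv : a.perm⁻¹ w = w := by
    rw [Equiv.Perm.inv_eq_iff_eq]; exact ha1.symm
  constructor
  · show a.perm (b.perm w) = w
    rw [hb1, ha1]
  · show a.flip w + b.flip (a.perm⁻¹ w) = 0
    rw [hainv, ha2, hb2, add_zero]

lemma Supp.inv {a : SpinElt m n} {k : ℕ} (ha : Supp a k) : Supp a⁻¹ k := by
  intro w hw
  obtain ⟨ha1, ha2⟩ := ha w hw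
  constructor
  · show a.perm⁻¹ w = w
    rw [Equiv.Perm.inv_eq_iff_eq]; exact ha1.symm
  · show a.flip (a.perm w) = 0
    rw [ha1, ha2]

lemma Supp.prod {l : List (SpinElt m n)} {k : ℕ} (h : ∀ s ∈ l, Supp s k) :
    Supp l.prod k := by
  induction l with
  | nil => simpa using Supp.one k
  | cons a l ih =>
    rw [List.prod_cons]
    exact (h a (by simp)).mul (ih fun s hs => h s (by simp [hs]))

lemma spin_perm_apply (R : Rect m n) (w : Pos m n) : R.spin.perm w = R.rotFun w := rfl

lemma spin_perm_inv_apply (R : Rect m n) (w : Pos m n) : R.spin.perm⁻¹ w = R.rotFun w := rfl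

lemma spin_flip (R : Rect m n) (w : Pos m n) :
    R.spin.flip w = if R.Mem w then 1 else 0 := rfl

lemma Supp.spin {R : Rect m n} {k : ℕ} (h : ∀ w : Pos m n, R.Mem w → k ≤ idx w) :
    Supp R.spin k := by
  intro w hw
  have hnm : ¬ R.Mem w := fun hmem => absurd (h w hmem) (by omega)
  constructor
  · rw [spin_perm_apply, R.rotFun_of_not_mem w hnm]
  · rw [spin_flip, if_neg hnm]

/-- The invariant: all cells of index `< k` are already solved in `x`. -/
def SolvedBelow (k : ℕ) (x : SpinElt m n) : Prop :=
  ∀ p : Pos m n, idx p < k → x.perm p = p ∧ x.flip p = 0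

/-- cost of solving cell number `k`. -/
def cost (m n k : ℕ) : ℕ :=
  if k / m = n - 1 then (if k % m = m - 1 then 1 else 2)
  else if k % m = 0 then 2 else 3

lemma cost_pos (m n k : ℕ) : 1 ≤ cost m n k := by
  unfold cost; split_ifs <;> omega

lemma le_idx_of (hm : 0 < m) {k : ℕ} (q w : Pos m n) (hq : idx q = k)
    (h : q.2.val < w.2.val ∨ (w.2.val = q.2.val ∧ w.1.val ≤ q.1.val)) : k ≤ idx w := by
  unfold idx at *
  rcases h with h | ⟨h1, h2⟩
  · have h3 : (q.2.val + 1) * m ≤ w.2.val * m := Nat.mul_le_mul_right m (by omega)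
    have hq1 : q.1.val < m := q.1.isLt
    rw [Nat.add_mul] at h3
    omega
  · rw [h1]
    have hw1 : w.1.val < m := w.1.isLt
    omega

set_option maxHeartbeats 1000000 in
/-- The key step: solving one more cell with at most `cost m n k` spins. -/
lemma step (hm : 0 < m) (hn : 0 < n) {k : ℕ} (hk : k < m * n) (q : Pos m n)
    (hq : idx q = k) (x : SpinElt m n) (hx : SolvedBelow k x) :
    ∃ l : List (SpinElt m n),
      (∀ s ∈ l, IsSpin s) ∧ (∀ s ∈ l, Supp s k) ∧ l.length ≤ cost m n k ∧
      l.prod.perm q = x.perm q ∧ l.prod.flip (x.perm q) = x.flip (x.perm q) := by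
  set p := x.perm q with hp
  -- the tile that must go to q sits at p, which is an unsolved cell
  have hkp : k ≤ idx p := by
    by_contra h
    push_neg at h
    obtain ⟨h1, _⟩ := hx p h
    have h2 : q = p := x.perm.injective (by rw [h1, ← hp])
    rw [h2] at hq; omega
  set i := q.1.val with hi
  set j := q.2.val with hj
  set r := p.1.val with hr
  set c := p.2.val with hc
  have hi_lt : i < m := q.1.isLt
  have hj_lt : j < n := q.2.isLt
  have hr_lt : r < m := p.1.isLt
  have hc_lt : c < n := p.2.isLt
  have h1 : (m - 1 - i) + j * m = k := hq
  have h2 : k ≤ (m - 1 - r) + c * m := hkp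
  have hmod : k % m = m - 1 - i := by
    rw [← h1, Nat.add_mul_mod_self_right, Nat.mod_eq_of_lt (by omega)]
  have hdiv : k / m = j := by
    rw [← h1, Nat.add_mul_div_right _ _ hm, Nat.div_eq_of_lt (by omega)]
    omega
  -- region fact: c > j, or c = j and r ≤ i
  have hreg : j < c ∨ (c = j ∧ r ≤ i) := by
    rcases Nat.lt_trichotomy c j with h | h | h
    · exfalso
      have h3 : (c + 1) * m ≤ j * m := Nat.mul_le_mul_right m (by omega)
      rw [Nat.add_mul] at h3
      omega
    · right
      refine ⟨h, ?_⟩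
      rw [h] at h2
      omega
    · left; exact h
  -- the 1×1 spin at p, used to adjust orientation
  set Rpp : Rect m n := Rect.mk r c r c le_rfl le_rfl hr_lt hc_lt with hRpp
  have hcells_pp : ∀ w : Pos m n, Rpp.Mem w →
      r ≤ w.1.val ∧ w.1.val ≤ r ∧ c ≤ w.2.val ∧ w.2.val ≤ c := fun w hw => hw
  have hmempp : Rpp.Mem p := ⟨le_rfl, le_rfl, le_rfl, le_rfl⟩
  have hrotpp : Rpp.rotFun p = p := by
    refine Prod.ext (Fin.ext ?_) (Fin.ext ?_)
    · rw [Rpp.rotFun_fst p hmempp]; show r + r - r = r; omega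
    · rw [Rpp.rotFun_snd p hmempp]; show c + c - c = c; omega
  have hsupp_pp : Supp Rpp.spin k := by
    refine Supp.spin fun w hw => ?_
    obtain ⟨a1, a2, a3, a4⟩ := hcells_pp w hw
    have hwp : w = p := Prod.ext (Fin.ext (by omega)) (Fin.ext (by omega))
    rw [hwp]; exact hkp
  have hflip_pp : Rpp.spin.flip p = 1 := by rw [spin_flip, if_pos hmempp]
  have hv : x.flip p = 0 ∨ x.flip p = 1 := by
    generalize x.flip p = v
    revert v; decide
  by_cases hpq : p = q
  · -- case a: tile already in place
    rcases hv with hv0 | hv1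
    · refine ⟨[], by simp, by simp, by simpa using cost_pos m n k, ?_, ?_⟩
      · rw [List.prod_nil]
        show (1 : Equiv.Perm (Pos m n)) q = p
        rw [Equiv.Perm.one_apply, hpq]
      · rw [List.prod_nil, hv0]
        show (0 : Pos m n → ZMod 2) p = 0
        rfl
    · refine ⟨[Rpp.spin], ?_, ?_, by simpa using cost_pos m n k, ?_, ?_⟩
      · intro s hs; rw [List.mem_singleton] at hs; exact ⟨Rpp, hs⟩
      · intro s hs; rw [List.mem_singleton] at hs; rw [hs]; exact hsupp_pp
      · rw [List.prod_singleton, ← hpq, spin_perm_apply, hrotpp]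
      · rw [List.prod_singleton, hflip_pp, hv1]
  · -- tile not in place
    have hjc : j ≤ c := by omega
    -- cost is at least 2 whenever the tile is not in place
    have hcost2 : 2 ≤ cost m n k := by
      have hne : ¬ (k / m = n - 1 ∧ k % m = m - 1) := by
        rintro ⟨hd, hmo⟩
        rw [hdiv] at hd
        rw [hmod] at hmo
        have hie : i = 0 := by omega
        have hce : c = j := by omega
        have hre : r ≤ i := by
          rcases hreg with hh | ⟨_, hh⟩
          · omega
          · exact hh
        exact hpq (Prod.ext (Fin.ext (by omega)) (Fin.ext (by omega)))
      unfold cost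
      split_ifs with ha hb <;> omega
    by_cases hri : r ≤ i
    · -- case b: one big spin moving p to q directly (plus orientation fix)
      set Rb : Rect m n := Rect.mk r j i c hri hjc hi_lt hc_lt with hRb
      have hcells_b : ∀ w : Pos m n, Rb.Mem w →
          r ≤ w.1.val ∧ w.1.val ≤ i ∧ j ≤ w.2.val ∧ w.2.val ≤ c := fun w hw => hw
      have hmemq : Rb.Mem q := ⟨hri, le_rfl, le_rfl, hjc⟩
      have hmemp : Rb.Mem p := ⟨le_rfl, hri, hjc, le_rfl⟩
      have hrotq : Rb.rotFun q = p := by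
        refine Prod.ext (Fin.ext ?_) (Fin.ext ?_)
        · rw [Rb.rotFun_fst q hmemq]; show r + i - i = r; omega
        · rw [Rb.rotFun_snd q hmemq]; show j + c - j = c; omega
      have hsupp_b : Supp Rb.spin k := by
        refine Supp.spin fun w hw => ?_
        obtain ⟨a1, a2, a3, a4⟩ := hcells_b w hw
        refine le_idx_of hm q w hq ?_
        rcases Nat.eq_or_lt_of_le a3 with h | h
        · right; exact ⟨h.symm, a2⟩
        · left; exact h
      have hflipq : Rb.spin.flip q = 1 := by rw [spin_flip, if_pos hmemq]
      rcases hv with hv0 | hv1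
      · -- need even flip count: 1×1 at p then the big spin
        refine ⟨[Rpp.spin, Rb.spin], ?_, ?_, by simp only [List.length_cons, List.length_nil]; omega, ?_, ?_⟩
        · intro s hs
          rcases List.mem_pair.mp hs with hs | hs
          exacts [⟨Rpp, hs⟩, ⟨Rb, hs⟩]
        · intro s hs
          rcases List.mem_pair.mp hs with hs | hs
          · rw [hs]; exact hsupp_pp
          · rw [hs]; exact hsupp_b
        · show (Rpp.spin * (Rb.spin * 1)).perm q = p
          rw [mul_one]
          show Rpp.spin.perm (Rb.spin.perm q) = p
          rw [spin_perm_apply, spin_perm_apply, hrotq, hrotpp]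
        · show (Rpp.spin * (Rb.spin * 1)).flip p = x.flip p
          rw [mul_one]
          show Rpp.spin.flip p + Rb.spin.flip (Rpp.spin.perm⁻¹ p) = x.flip p
          rw [spin_perm_inv_apply, hrotpp, hflip_pp, spin_flip, if_pos hmemp, hv0]
          decide
      · refine ⟨[Rb.spin], ?_, ?_, by simp only [List.length_cons, List.length_nil]; omega, ?_, ?_⟩
        · intro s hs; rw [List.mem_singleton] at hs; exact ⟨Rb, hs⟩
        · intro s hs; rw [List.mem_singleton] at hs; rw [hs]; exact hsupp_b
        · rw [List.prod_singleton, spin_perm_apply, hrotq]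
        · rw [List.prod_singleton, spin_flip, if_pos hmemp, hv1]
    · -- case c: r > i, so c > j; two spins (vertical then horizontal), plus fix
      push_neg at hri
      have hcj : j < c := by
        rcases hreg with h | ⟨_, h⟩
        · exact h
        · omega
      have hcost3 : cost m n k = 3 := by
        unfold cost
        rw [if_neg, if_neg]
        · rw [hmod]; omega
        · rw [hdiv]; omega
      set R1 : Rect m n := Rect.mk i c r c (le_of_lt hri) le_rfl hr_lt hc_lt with hR1
      have hcells_1 : ∀ w : Pos m n, R1.Mem w →
          i ≤ w.1.val ∧ w.1.val ≤ r ∧ c ≤ w.2.val ∧ w.2.val ≤ c := fun w hw => hw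
      set R2 : Rect m n := Rect.mk i j i c le_rfl (le_of_lt hcj) hi_lt hc_lt with hR2
      have hcells_2 : ∀ w : Pos m n, R2.Mem w →
          i ≤ w.1.val ∧ w.1.val ≤ i ∧ j ≤ w.2.val ∧ w.2.val ≤ c := fun w hw => hw
      set w1 : Pos m n := (⟨i, hi_lt⟩, ⟨c, hc_lt⟩) with hw1
      have hmem2q : R2.Mem q := ⟨le_rfl, le_rfl, le_rfl, le_of_lt hcj⟩
      have hrot2q : R2.rotFun q = w1 := by
        refine Prod.ext (Fin.ext ?_) (Fin.ext ?_)
        · rw [R2.rotFun_fst q hmem2q]; show i + i - i = i; omega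
        · rw [R2.rotFun_snd q hmem2q]; show j + c - j = c; omega
      have hmem1w : R1.Mem w1 := ⟨le_rfl, le_of_lt hri, le_rfl, le_rfl⟩
      have hrot1w : R1.rotFun w1 = p := by
        refine Prod.ext (Fin.ext ?_) (Fin.ext ?_)
        · rw [R1.rotFun_fst w1 hmem1w]; show i + r - i = r; omega
        · rw [R1.rotFun_snd w1 hmem1w]; show c + c - c = c; omega
      have hmem1p : R1.Mem p := ⟨le_of_lt hri, le_rfl, le_rfl, le_rfl⟩
      have hrot1p : R1.rotFun p = w1 := by
        refine Prod.ext (Fin.ext ?_) (Fin.ext ?_)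
        · rw [R1.rotFun_fst p hmem1p]; show i + r - r = i; omega
        · rw [R1.rotFun_snd p hmem1p]; show c + c - c = c; omega
      have hmem2w : R2.Mem w1 := ⟨le_rfl, le_rfl, le_of_lt hcj, le_rfl⟩
      have hsupp_1 : Supp R1.spin k := by
        refine Supp.spin fun w hw => ?_
        obtain ⟨a1, a2, a3, a4⟩ := hcells_1 w hw
        exact le_idx_of hm q w hq (Or.inl (by omega))
      have hsupp_2 : Supp R2.spin k := by
        refine Supp.spin fun w hw => ?_
        obtain ⟨a1, a2, a3, a4⟩ := hcells_2 w hw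
        refine le_idx_of hm q w hq ?_
        rcases Nat.eq_or_lt_of_le a3 with h | h
        · right; exact ⟨h.symm, a2⟩
        · left; exact h
      have hperm12 : (R1.spin * R2.spin).perm q = p := by
        show R1.spin.perm (R2.spin.perm q) = p
        rw [spin_perm_apply, spin_perm_apply, hrot2q, hrot1w]
      have hflip12 : (R1.spin * R2.spin).flip p = 0 := by
        show R1.spin.flip p + R2.spin.flip (R1.spin.perm⁻¹ p) = 0
        rw [spin_perm_inv_apply, hrot1p, spin_flip, spin_flip, if_pos hmem1p,
          if_pos hmem2w]
        decide
      rcases hv with hv0 | hv1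
      · refine ⟨[R1.spin, R2.spin], ?_, ?_, by rw [hcost3]; simp, ?_, ?_⟩
        · intro s hs
          rcases List.mem_pair.mp hs with hs | hs
          exacts [⟨R1, hs⟩, ⟨R2, hs⟩]
        · intro s hs
          rcases List.mem_pair.mp hs with hs | hs
          · rw [hs]; exact hsupp_1
          · rw [hs]; exact hsupp_2
        · show (R1.spin * (R2.spin * 1)).perm q = p
          rw [mul_one]; exact hperm12
        · show (R1.spin * (R2.spin * 1)).flip p = x.flip p
          rw [mul_one, hflip12, hv0]
      · refine ⟨[Rpp.spin, R1.spin, R2.spin], ?_, ?_, by rw [hcost3]; simp, ?_, ?_⟩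
        · intro s hs
          simp only [List.mem_cons, List.not_mem_nil, or_false] at hs
          rcases hs with hs | hs | hs
          exacts [⟨Rpp, hs⟩, ⟨R1, hs⟩, ⟨R2, hs⟩]
        · intro s hs
          simp only [List.mem_cons, List.not_mem_nil, or_false] at hs
          rcases hs with hs | hs | hs
          · rw [hs]; exact hsupp_pp
          · rw [hs]; exact hsupp_1
          · rw [hs]; exact hsupp_2
        · show (Rpp.spin * (R1.spin * (R2.spin * 1))).perm q = p
          rw [mul_one]
          show Rpp.spin.perm ((R1.spin * R2.spin).perm q) = p
          rw [hperm12, spin_perm_apply, hrotpp]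
        · show (Rpp.spin * (R1.spin * (R2.spin * 1))).flip p = x.flip p
          rw [mul_one]
          show Rpp.spin.flip p + (R1.spin * R2.spin).flip (Rpp.spin.perm⁻¹ p) = x.flip p
          rw [spin_perm_inv_apply, hrotpp, hflip_pp, hflip12, hv1, add_zero]

lemma solved_succ (hm : 0 < m) {k : ℕ} (q : Pos m n) (hq : idx q = k)
    (x P : SpinElt m n) (hx : SolvedBelow k x) (hsup : Supp P k)
    (hperm : P.perm q = x.perm q) (hflip : P.flip (x.perm q) = x.flip (x.perm q)) :
    SolvedBelow (k + 1) (P⁻¹ * x) := by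
  have hPinv : ∀ w : Pos m n, ((P⁻¹).perm)⁻¹ w = P.perm w := by
    intro w
    show ((P.perm⁻¹)⁻¹) w = P.perm w
    rw [inv_inv]
  intro w hw
  rcases Nat.lt_or_ge (idx w) k with h | h
  · obtain ⟨hx1, hx2⟩ := hx w h
    obtain ⟨hP1, hP2⟩ := hsup.inv w h
    obtain ⟨hP1', hP2'⟩ := hsup w h
    constructor
    · show (P⁻¹).perm (x.perm w) = w
      rw [hx1, hP1]
    · show (P⁻¹).flip w + x.flip (((P⁻¹).perm)⁻¹ w) = 0
      rw [hPinv, hP1', hx2, hP2, add_zero]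
  · have hwk : idx w = k := by omega
    have hwq : w = q := idx_inj w q hm (by rw [hwk, hq])
    subst hwq
    constructor
    · show (P⁻¹).perm (x.perm w) = w
      show P.perm⁻¹ (x.perm w) = w
      rw [← hperm, Equiv.Perm.inv_eq_iff_eq]
    · show (P⁻¹).flip w + x.flip (((P⁻¹).perm)⁻¹ w) = 0
      rw [hPinv]
      show P.flip (P.perm w) + x.flip (P.perm w) = 0
      rw [hperm, hflip]
      exact CharTwo.add_self_eq_zero _

lemma exists_cell (hm : 0 < m) {k : ℕ} (hk : k < m * n) : ∃ q : Pos m n, idx q = k := by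
  have h1 : k % m < m := Nat.mod_lt _ hm
  have h2 : k / m * m + k % m = k := Nat.div_add_mod' k m
  have h3 : k / m < n := by
    rw [Nat.div_lt_iff_lt_mul hm, Nat.mul_comm]
    exact hk
  refine ⟨(⟨m - 1 - k % m, by omega⟩, ⟨k / m, h3⟩), ?_⟩
  show (m - 1 - (m - 1 - k % m)) + k / m * m = k
  omega

lemma solve_aux (hm : 0 < m) (hn : 0 < n) :
    ∀ d k, k + d = m * n → ∀ x : SpinElt m n, SolvedBelow k x →
      ∃ l : List (SpinElt m n), (∀ s ∈ l, IsSpin s) ∧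
        l.length ≤ ∑ t ∈ Finset.Ico k (m * n), cost m n t ∧ l.prod = x := by
  intro d
  induction d with
  | zero =>
    intro k hk x hx
    have hx1 : x = 1 := by
      refine SpinElt.ext (Equiv.ext fun p => ?_) (funext fun p => ?_)
      · have := (hx p (by have := idx_lt hm p; omega)).1
        simpa using this
      · have := (hx p (by have := idx_lt hm p; omega)).2
        simpa using this
    exact ⟨[], by simp, by simp, by simp [hx1]⟩
  | succ d ih =>
    intro k hk x hx
    have hklt : k < m * n := by omega
    obtain ⟨q, hq⟩ := exists_cell hm hklt
    obtain ⟨l₀, hspin, hsupp, hlen, hperm, hflip⟩ := step hm hn hklt q hq x hx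
    have hsolved : SolvedBelow (k + 1) (l₀.prod⁻¹ * x) :=
      solved_succ hm q hq x l₀.prod hx (Supp.prod hsupp) hperm hflip
    obtain ⟨l₁, h1, h2, h3⟩ := ih (k + 1) (by omega) _ hsolved
    refine ⟨l₀ ++ l₁, ?_, ?_, ?_⟩
    · intro s hs
      rcases List.mem_append.mp hs with hs | hs
      exacts [hspin s hs, h1 s hs]
    · rw [List.length_append]
      have hsum := Finset.sum_eq_sum_Ico_succ_bot hklt (cost m n)
      omega
    · rw [List.prod_append, h3]
      exact mul_inv_cancel_left _ x

lemma sum_if_zero : ∀ m : ℕ, 0 < m →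
    ∑ r ∈ Finset.range m, (if r = 0 then 2 else 3) = 3 * m - 1 := by
  intro m
  induction m with
  | zero => omega
  | succ m ih =>
    intro _
    rcases Nat.eq_zero_or_pos m with h | h
    · subst h; decide
    · rw [Finset.sum_range_succ, ih h, if_neg (by omega)]
      omega

lemma sum_if_last (m : ℕ) (hm : 0 < m) :
    ∑ r ∈ Finset.range m, (if r = m - 1 then 1 else 2) = 2 * m - 1 := by
  obtain ⟨m', rfl⟩ : ∃ m', m = m' + 1 := ⟨m - 1, by omega⟩
  rw [Finset.sum_range_succ, if_pos (by omega)]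
  have h : ∑ r ∈ Finset.range m', (if r = m' + 1 - 1 then 1 else 2) =
      ∑ _r ∈ Finset.range m', 2 := by
    refine Finset.sum_congr rfl fun r hr => ?_
    rw [Finset.mem_range] at hr
    rw [if_neg (by omega)]
  rw [h, Finset.sum_const, Finset.card_range, smul_eq_mul]
  omega

lemma sumA (hm : 0 < m) : ∀ j : ℕ,
    ∑ k ∈ Finset.range (m * j), (if k % m = 0 then 2 else 3) = (3 * m - 1) * j := by
  intro j
  induction j with
  | zero => simp
  | succ j ih =>
    have hsplit : ∑ k ∈ Finset.Ico 0 (m * j), (if k % m = 0 then 2 else 3) +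
        ∑ k ∈ Finset.Ico (m * j) (m * j + m), (if k % m = 0 then 2 else 3) =
        ∑ k ∈ Finset.Ico 0 (m * j + m), (if k % m = 0 then 2 else 3) :=
      Finset.sum_Ico_consecutive _ (Nat.zero_le _) (Nat.le_add_right _ _)
    have hblock : ∑ k ∈ Finset.Ico (m * j) (m * j + m), (if k % m = 0 then 2 else 3) =
        3 * m - 1 := by
      rw [Finset.sum_Ico_eq_sum_range]
      simp only [Nat.add_sub_cancel_left]
      rw [← sum_if_zero m hm]
      refine Finset.sum_congr rfl fun r hr => ?_
      rw [Finset.mem_range] at hr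
      rw [Nat.mul_add_mod, Nat.mod_eq_of_lt hr]
    have hmul : m * (j + 1) = m * j + m := Nat.mul_succ m j
    rw [hmul, Finset.range_eq_Ico, ← hsplit, ← Finset.range_eq_Ico, ih, hblock]
    have h1 : 3 * m - 1 + 1 = 3 * m := by omega
    have h2 : (3 * m - 1) * (j + 1) = (3 * m - 1) * j + (3 * m - 1) :=
      Nat.mul_succ _ _
    omega

lemma sum_cost (hm : 0 < m) (hn : 0 < n) :
    ∑ k ∈ Finset.range (m * n), cost m n k = 3 * m * n - (m + n) := by
  obtain ⟨n', rfl⟩ : ∃ n', n = n' + 1 := ⟨n - 1, by omega⟩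
  have hmul : m * (n' + 1) = m * n' + m := Nat.mul_succ m n'
  have hsplit : ∑ k ∈ Finset.Ico 0 (m * n'), cost m (n' + 1) k +
      ∑ k ∈ Finset.Ico (m * n') (m * n' + m), cost m (n' + 1) k =
      ∑ k ∈ Finset.Ico 0 (m * n' + m), cost m (n' + 1) k :=
    Finset.sum_Ico_consecutive _ (Nat.zero_le _) (Nat.le_add_right _ _)
  have hfirst : ∑ k ∈ Finset.Ico 0 (m * n'), cost m (n' + 1) k =
      (3 * m - 1) * n' := by
    rw [← Finset.range_eq_Ico, ← sumA hm n']
    refine Finset.sum_congr rfl fun k hk => ?_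
    rw [Finset.mem_range] at hk
    have hdlt : k / m < n' := by
      rw [Nat.div_lt_iff_lt_mul hm, Nat.mul_comm]
      exact hk
    unfold cost
    rw [if_neg (by omega)]
  have hlast : ∑ k ∈ Finset.Ico (m * n') (m * n' + m), cost m (n' + 1) k =
      2 * m - 1 := by
    rw [Finset.sum_Ico_eq_sum_range]
    simp only [Nat.add_sub_cancel_left]
    rw [← sum_if_last m hm]
    refine Finset.sum_congr rfl fun r hr => ?_
    rw [Finset.mem_range] at hr
    unfold cost
    rw [Nat.mul_add_mod, Nat.mod_eq_of_lt hr,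
      Nat.mul_add_div hm, Nat.div_eq_of_lt hr]
    rw [if_pos (by omega)]
  rw [hmul, Finset.range_eq_Ico, ← hsplit, hfirst, hlast]
  have e1 : (3 * m - 1) * n' + n' = 3 * m * n' := by
    have h3m : 3 * m - 1 + 1 = 3 * m := by omega
    calc (3 * m - 1) * n' + n' = (3 * m - 1 + 1) * n' := by rw [Nat.add_mul, Nat.one_mul]
    _ = 3 * m * n' := by rw [h3m]
  have e2 : 3 * m * (n' + 1) = 3 * m * n' + 3 * m := Nat.mul_succ _ _
  omega

end SpinProof

/-- Every element of `Spin_{m×n}` is a product of at most `3mn - (m+n)` spins. -/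
theorem stmt11 (m n : ℕ) (x : SpinElt m n) :
    ∃ l : List (SpinElt m n),
      (∀ s ∈ l, IsSpin s) ∧ l.length ≤ 3 * m * n - (m + n) ∧ l.prod = x := by
  rcases Nat.eq_zero_or_pos m with hm | hm
  · have he : ∀ p : Pos m n, False := fun p => by subst hm; exact p.1.elim0
    have hx1 : x = 1 :=
      SpinElt.ext (Equiv.ext fun p => (he p).elim) (funext fun p => (he p).elim)
    exact ⟨[], by simp, by simp, by simp [hx1]⟩
  rcases Nat.eq_zero_or_pos n with hn | hn
  · have he : ∀ p : Pos m n, False := fun p => by subst hn; exact p.2.elim0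
    have hx1 : x = 1 :=
      SpinElt.ext (Equiv.ext fun p => (he p).elim) (funext fun p => (he p).elim)
    exact ⟨[], by simp, by simp, by simp [hx1]⟩
  have h0 : SpinProof.SolvedBelow 0 x := fun p hp => absurd hp (by omega)
  obtain ⟨l, h1, h2, h3⟩ := SpinProof.solve_aux hm hn (m * n) 0 (by omega) x h0
  refine ⟨l, h1, ?_, h3⟩
  calc l.length ≤ ∑ t ∈ Finset.Ico 0 (m * n), SpinProof.cost m n t := h2
  _ = 3 * m * n - (m + n) := by
      rw [← Finset.range_eq_Ico]; exact SpinProof.sum_cost hm hn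
end

section
/- For N = mn > 1, the minimal number k of spins needed in the worst case satisfies k ≥ (1/2)N − ((1−ln 2)/2)·(N/ln N) + 1/4, given that (C(m+1,2)C(n+1,2)+1)^k ≥ 2^N·N! and C(m+1,2)C(n+1,2)+1 < N². -/
open Real Filter

lemma stirling_seq_ge_one (n : ℕ) : 1 ≤ Stirling.stirlingSeq (n + 1) := by
  have hπ : (1 : ℝ) ≤ √π := by
    rw [show (1:ℝ) = √1 by simp]
    exact Real.sqrt_le_sqrt (by linarith [Real.pi_gt_three])
  have hlim : Tendsto (Real.log ∘ Stirling.stirlingSeq ∘ Nat.succ) atTop (nhds (Real.log (√π))) := by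
    exact (Real.continuousAt_log (by positivity)).tendsto.comp
      (Stirling.tendsto_stirlingSeq_sqrt_pi.comp (tendsto_add_atTop_nat 1))
  have h := Stirling.log_stirlingSeq'_antitone.le_of_tendsto hlim n
  have hlog : Real.log (√π) ≤ Real.log (Stirling.stirlingSeq (n + 1)) := h
  have := (Real.log_le_log_iff (by positivity) (Stirling.stirlingSeq'_pos n)).mp hlog
  linarith

lemma log_factorial_ge (N : ℕ) (hN : 1 ≤ N) :
    (N : ℝ) * Real.log N - N + (1/2) * Real.log N ≤ Real.log (N.factorial) := by
  obtain ⟨M, rfl⟩ := Nat.exists_eq_add_of_le hN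
  set n := 1 + M with hn
  have hn1 : 1 ≤ n := by omega
  have hnpos : (0:ℝ) < n := by exact_mod_cast hn1
  have h1 := stirling_seq_ge_one M
  have hMn : M + 1 = n := by omega
  rw [hMn] at h1
  have hden : (0:ℝ) < √(2 * n) * ((n : ℝ) / Real.exp 1) ^ n := by positivity
  have hfact : √(2 * n) * ((n : ℝ) / Real.exp 1) ^ n ≤ (n.factorial : ℝ) := by
    have := (one_le_div hden).mp (by rw [Stirling.stirlingSeq] at h1; exact h1)
    exact this
  have hlog := Real.log_le_log hden hfact
  rw [Real.log_mul (by positivity) (by positivity), Real.log_pow,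
    Real.log_div (by positivity) (Real.exp_ne_zero 1), Real.log_exp,
    Real.log_sqrt (by positivity), Real.log_mul (by norm_num) (ne_of_gt hnpos)] at hlog
  have hl2 : (0:ℝ) ≤ Real.log 2 := Real.log_nonneg (by norm_num)
  linarith

/-- For `N = mn > 1`, if `c^k ≥ 2^N · N!` where `c = C(m+1,2)C(n+1,2) + 1 < N²`, then
`k ≥ N/2 - ((1 - ln 2)/2)·(N / ln N) + 1/4`. -/
theorem stmt13 (m n N k : ℕ) (hN : N = m * n) (hN1 : 1 < N)
    (hck : (2 : ℝ) ^ N * N.factorial ≤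
      ((Nat.choose (m + 1) 2 * Nat.choose (n + 1) 2 + 1 : ℕ) : ℝ) ^ k)
    (hcN : Nat.choose (m + 1) 2 * Nat.choose (n + 1) 2 + 1 < N ^ 2) :
    (1 / 2 : ℝ) * N - ((1 - Real.log 2) / 2) * (N / Real.log N) + 1 / 4 ≤ (k : ℝ) := by
  set c : ℕ := Nat.choose (m + 1) 2 * Nat.choose (n + 1) 2 + 1 with hc
  have hm : 1 ≤ m := Nat.one_le_iff_ne_zero.mpr (by rintro rfl; simp at hN; omega)
  have hn1 : 1 ≤ n := Nat.one_le_iff_ne_zero.mpr (by rintro rfl; simp at hN; omega)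
  have hc1 : 1 ≤ c := by omega
  have hcpos : (0:ℝ) < (c:ℝ) := by exact_mod_cast hc1
  have hNpos : (0:ℝ) < (N:ℝ) := by exact_mod_cast (by omega : 0 < N)
  have hlogN : 0 < Real.log N := Real.log_pos (by exact_mod_cast hN1)
  have hfpos : (0:ℝ) < (N.factorial : ℝ) := by exact_mod_cast N.factorial_pos
  -- log c ≤ 2 log N
  have hlogc : Real.log c ≤ 2 * Real.log N := by
    have : (c:ℝ) ≤ (N:ℝ)^2 := by exact_mod_cast hcN.le
    calc Real.log c ≤ Real.log ((N:ℝ)^2) := Real.log_le_log hcpos this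
      _ = 2 * Real.log N := by rw [Real.log_pow]; push_cast; ring
  -- take logs of hck
  have hlhs : (N:ℝ) * Real.log 2 + Real.log (N.factorial) ≤ k * (2 * Real.log N) := by
    have h1 : Real.log ((2:ℝ)^N * N.factorial) ≤ Real.log ((c:ℝ)^k) :=
      Real.log_le_log (by positivity) hck
    rw [Real.log_mul (by positivity) (ne_of_gt hfpos), Real.log_pow, Real.log_pow] at h1
    have h2 : (k:ℝ) * Real.log c ≤ k * (2 * Real.log N) :=
      mul_le_mul_of_nonneg_left hlogc (Nat.cast_nonneg k)
    linarith
  have hstir := log_factorial_ge N (by omega)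
  rw [← mul_le_mul_iff_of_pos_right (show (0:ℝ) < 2 * Real.log N by linarith)]
  have heq : ((1 / 2 : ℝ) * N - ((1 - Real.log 2) / 2) * (N / Real.log N) + 1 / 4) *
      (2 * Real.log N) = (N:ℝ) * Real.log 2 + ((N:ℝ) * Real.log N - N + (1/2) * Real.log N) := by
    field_simp
    ring
  rw [heq]
  linarith
end

section
/- The subgroup of Spin_{m×n} generated by the 1×2 and 2×1 spins maps isomorphically onto S_N under the projection π : Spin_{m×n} → S_N; in particular this subgroup has trivial intersection with the kernel of π and has index 2^N in Spin_{m×n}. -/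
/-- The projection `π : Spin_{m×n} → S_N`, `(α, u) ↦ α`, as a group homomorphism. -/
def spinProj (m n : ℕ) : SpinElt m n →* Equiv.Perm (Pos m n) where
  toFun x := x.perm
  map_one' := rfl
  map_mul' _ _ := rfl

section Aux
variable {m n : ℕ}

/-- Checkerboard coloring. -/
def colr (p : Pos m n) : ZMod 2 := ((p.1.val + p.2.val : ℕ) : ZMod 2)

/-- Elements whose flip vector is determined by the permutation via the coloring. -/
def goodSet (m n : ℕ) : Subgroup (SpinElt m n) where
  carrier := {x | ∀ p, x.flip p = colr p + colr (x.perm⁻¹ p)}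
  one_mem' := by
    intro p
    show (0 : Pos m n → ZMod 2) p = colr p + colr ((1 : Equiv.Perm (Pos m n))⁻¹ p)
    simp [CharTwo.add_self_eq_zero]
  mul_mem' := by
    intro a b ha hb p
    show a.flip p + b.flip (a.perm⁻¹ p) = colr p + colr ((a.perm * b.perm)⁻¹ p)
    rw [ha p, hb (a.perm⁻¹ p)]
    have : ((a.perm * b.perm)⁻¹ p) = b.perm⁻¹ (a.perm⁻¹ p) := by
      rw [mul_inv_rev]; rfl
    rw [this, add_assoc, ← add_assoc (colr (a.perm⁻¹ p)), CharTwo.add_self_eq_zero, zero_add]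
  inv_mem' := by
    intro a ha p
    show a.flip (a.perm p) = colr p + colr ((a.perm⁻¹)⁻¹ p)
    rw [ha (a.perm p), inv_inv]
    simp [add_comm]

lemma spin_mem_good (R : Rect m n) (h : R.dims = (1, 2) ∨ R.dims = (2, 1)) :
    R.spin ∈ goodSet m n := by
  intro p
  show (if R.Mem p then (1 : ZMod 2) else 0) = colr p + colr (R.spinPerm⁻¹ p)
  have hinv : R.spinPerm⁻¹ p = R.rotFun p := rfl
  by_cases hp : R.Mem p
  · rw [if_pos hp, hinv]
    have e1 := R.rotFun_fst p hp
    have e2 := R.rotFun_snd p hp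
    unfold colr
    rw [← Nat.cast_add]
    have hsum : (p.1.val + p.2.val + ((R.rotFun p).1.val + (R.rotFun p).2.val)) % 2 = 1 := by
      rw [e1, e2]
      obtain ⟨h1, h2, h3, h4⟩ := hp
      rcases h with h | h <;>
      · have hd := congrArg Prod.fst h
        have hd2 := congrArg Prod.snd h
        simp only [Rect.dims] at hd hd2
        omega
    rw [← ZMod.natCast_mod, hsum, Nat.cast_one]
  · rw [if_neg hp, hinv, R.rotFun_of_not_mem p hp]
    exact (CharTwo.add_self_eq_zero _).symm

/-- Horizontal domino spin realizing an adjacent swap. -/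
lemma adj_spin_h (p q : Pos m n) (h1 : p.1.val = q.1.val) (h2 : p.2.val + 1 = q.2.val) :
    ∃ R : Rect m n, R.dims = (1, 2) ∧ R.spinPerm = Equiv.swap p q := by
  refine ⟨⟨p.1.val, p.2.val, q.1.val, q.2.val, by omega, by omega, q.1.isLt, q.2.isLt⟩, ?_, ?_⟩
  · simp only [Rect.dims, Prod.mk.injEq]
    omega
  · set R : Rect m n := ⟨p.1.val, p.2.val, q.1.val, q.2.val, by omega, by omega,
      q.1.isLt, q.2.isLt⟩ with hR
    have hr1 : R.r1 = p.1.val := rfl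
    have hr2 : R.r2 = q.1.val := rfl
    have hc1 : R.c1 = p.2.val := rfl
    have hc2 : R.c2 = q.2.val := rfl
    apply Equiv.ext
    intro z
    show R.rotFun z = Equiv.swap p q z
    by_cases hz : R.Mem z
    · have e1 := R.rotFun_fst z hz
      have e2 := R.rotFun_snd z hz
      obtain ⟨a1, a2, a3, a4⟩ := id hz
      have h5 : z.2.val = p.2.val ∨ z.2.val = q.2.val := by omega
      rcases h5 with h5 | h5
      · have hzp : z = p := Prod.ext (Fin.ext (by omega)) (Fin.ext h5)
        rw [hzp] at e1 e2 ⊢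
        rw [Equiv.swap_apply_left]
        exact Prod.ext (Fin.ext (by omega)) (Fin.ext (by omega))
      · have hzq : z = q := Prod.ext (Fin.ext (by omega)) (Fin.ext h5)
        rw [hzq] at e1 e2 ⊢
        rw [Equiv.swap_apply_right]
        exact Prod.ext (Fin.ext (by omega)) (Fin.ext (by omega))
    · rw [R.rotFun_of_not_mem z hz, Equiv.swap_apply_of_ne_of_ne]
      · rintro rfl
        refine hz ⟨?_, ?_, ?_, ?_⟩ <;> simp only [hr1, hr2, hc1, hc2] <;> omega
      · rintro rfl
        refine hz ⟨?_, ?_, ?_, ?_⟩ <;> simp only [hr1, hr2, hc1, hc2] <;> omega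

/-- Vertical domino spin realizing an adjacent swap. -/
lemma adj_spin_v (p q : Pos m n) (h1 : p.1.val + 1 = q.1.val) (h2 : p.2.val = q.2.val) :
    ∃ R : Rect m n, R.dims = (2, 1) ∧ R.spinPerm = Equiv.swap p q := by
  refine ⟨⟨p.1.val, p.2.val, q.1.val, q.2.val, by omega, by omega, q.1.isLt, q.2.isLt⟩, ?_, ?_⟩
  · simp only [Rect.dims, Prod.mk.injEq]
    omega
  · set R : Rect m n := ⟨p.1.val, p.2.val, q.1.val, q.2.val, by omega, by omega,
      q.1.isLt, q.2.isLt⟩ with hR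
    have hr1 : R.r1 = p.1.val := rfl
    have hr2 : R.r2 = q.1.val := rfl
    have hc1 : R.c1 = p.2.val := rfl
    have hc2 : R.c2 = q.2.val := rfl
    apply Equiv.ext
    intro z
    show R.rotFun z = Equiv.swap p q z
    by_cases hz : R.Mem z
    · have e1 := R.rotFun_fst z hz
      have e2 := R.rotFun_snd z hz
      obtain ⟨a1, a2, a3, a4⟩ := id hz
      have h5 : z.1.val = p.1.val ∨ z.1.val = q.1.val := by omega
      rcases h5 with h5 | h5
      · have hzp : z = p := Prod.ext (Fin.ext h5) (Fin.ext (by omega))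
        rw [hzp] at e1 e2 ⊢
        rw [Equiv.swap_apply_left]
        exact Prod.ext (Fin.ext (by omega)) (Fin.ext (by omega))
      · have hzq : z = q := Prod.ext (Fin.ext h5) (Fin.ext (by omega))
        rw [hzq] at e1 e2 ⊢
        rw [Equiv.swap_apply_right]
        exact Prod.ext (Fin.ext (by omega)) (Fin.ext (by omega))
    · rw [R.rotFun_of_not_mem z hz, Equiv.swap_apply_of_ne_of_ne]
      · rintro rfl
        refine hz ⟨?_, ?_, ?_, ?_⟩ <;> simp only [hr1, hr2, hc1, hc2] <;> omega
      · rintro rfl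
        refine hz ⟨?_, ?_, ?_, ?_⟩ <;> simp only [hr1, hr2, hc1, hc2] <;> omega

/-- Any transposition lies in a subgroup containing all adjacent transpositions. -/
lemma swap_mem_of_adj (P : Subgroup (Equiv.Perm (Pos m n)))
    (hP : ∀ p q : Pos m n,
      ((p.1.val = q.1.val ∧ p.2.val + 1 = q.2.val) ∨
       (p.1.val + 1 = q.1.val ∧ p.2.val = q.2.val)) → Equiv.swap p q ∈ P) :
    ∀ d : ℕ, ∀ p q : Pos m n, p ≠ q →
      (p.1.val - q.1.val) + (q.1.val - p.1.val) +
        ((p.2.val - q.2.val) + (q.2.val - p.2.val)) ≤ d →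
      Equiv.swap p q ∈ P := by
  intro d
  induction d with
  | zero =>
    intro p q hne hd
    exact absurd (Prod.ext (Fin.ext (by omega)) (Fin.ext (by omega))) hne
  | succ d ih =>
    intro p q hne hd
    have hcomb : ∀ r : Pos m n, Equiv.swap p r ∈ P → r ≠ q → q ≠ p →
        Equiv.swap r q ∈ P → Equiv.swap p q ∈ P := by
      intro r hpr hrq hqp hrq'
      have hmem := mul_mem (mul_mem hpr hrq') hpr
      have heq : Equiv.swap p r * Equiv.swap r q * Equiv.swap p r = Equiv.swap p q := by
        rw [Equiv.swap_comm p r, Equiv.swap_comm r q]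
        exact Equiv.swap_mul_swap_mul_swap (fun h => hrq h.symm) hqp
      rwa [heq] at hmem
    rcases Nat.lt_trichotomy p.1.val q.1.val with h1 | h1 | h1
    · -- move down from p
      have hlt : p.1.val + 1 < m := by omega
      set r : Pos m n := (⟨p.1.val + 1, hlt⟩, p.2) with hr
      have hpr : Equiv.swap p r ∈ P := hP p r (Or.inr ⟨rfl, rfl⟩)
      by_cases hrq : r = q
      · rwa [hrq] at hpr
      · exact hcomb r hpr hrq (Ne.symm hne) (ih r q hrq (by simp only [hr]; omega))
    · -- same row
      rcases Nat.lt_trichotomy p.2.val q.2.val with h2 | h2 | h2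
      · have hlt : p.2.val + 1 < n := by omega
        set r : Pos m n := (p.1, ⟨p.2.val + 1, hlt⟩) with hr
        have hpr : Equiv.swap p r ∈ P := hP p r (Or.inl ⟨rfl, rfl⟩)
        by_cases hrq : r = q
        · rwa [hrq] at hpr
        · exact hcomb r hpr hrq (Ne.symm hne) (ih r q hrq (by simp only [hr]; omega))
      · exact absurd (Prod.ext (Fin.ext h1) (Fin.ext h2)) hne
      · have hlt : q.2.val + 1 < n := by omega
        set r : Pos m n := (p.1, ⟨p.2.val - 1, by omega⟩) with hr
        have hpr : Equiv.swap p r ∈ P := by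
          rw [Equiv.swap_comm]
          exact hP r p (Or.inl ⟨rfl, by simp only [hr]; omega⟩)
        by_cases hrq : r = q
        · rwa [hrq] at hpr
        · exact hcomb r hpr hrq (Ne.symm hne) (ih r q hrq (by simp only [hr]; omega))
    · -- move up from p
      set r : Pos m n := (⟨p.1.val - 1, by omega⟩, p.2) with hr
      have hpr : Equiv.swap p r ∈ P := by
        rw [Equiv.swap_comm]
        exact hP r p (Or.inr ⟨by simp only [hr]; omega, rfl⟩)
      by_cases hrq : r = q
      · rwa [hrq] at hpr
      · exact hcomb r hpr hrq (Ne.symm hne) (ih r q hrq (by simp only [hr]; omega))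

end Aux

/-- The subgroup generated by the `1×2` and `2×1` spins maps isomorphically onto `S_N`
under the projection `π`; in particular it meets the kernel of `π` trivially and has
index `2^N` in `Spin_{m×n}`. -/
theorem stmt15 (m n : ℕ) (H : Subgroup (SpinElt m n))
    (hH : H = Subgroup.closure {s : SpinElt m n | ∃ R : Rect m n, s = R.spin ∧
      (R.dims = (1, 2) ∨ R.dims = (2, 1))}) :
    Function.Injective (fun x : H => spinProj m n x) ∧
    (∀ σ : Equiv.Perm (Pos m n), ∃ x ∈ H, spinProj m n x = σ) ∧
    H ⊓ (spinProj m n).ker = ⊥ ∧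
    H.index = 2 ^ (m * n) := by
  -- H is contained in the "good" subgroup
  have hle : H ≤ goodSet m n := by
    rw [hH, Subgroup.closure_le]
    rintro s ⟨R, rfl, hdims⟩
    exact spin_mem_good R hdims
  -- injectivity
  have hinj : Function.Injective (fun x : H => spinProj m n x) := by
    intro x y hxy
    have hperm : (x : SpinElt m n).perm = (y : SpinElt m n).perm := hxy
    have hx := hle x.2
    have hy := hle y.2
    refine Subtype.ext (SpinElt.ext hperm (funext fun p => ?_))
    rw [hx p, hy p, hperm]
  -- adjacent swaps are in the image of H
  have hadj : ∀ p q : Pos m n,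
      ((p.1.val = q.1.val ∧ p.2.val + 1 = q.2.val) ∨
       (p.1.val + 1 = q.1.val ∧ p.2.val = q.2.val)) →
      Equiv.swap p q ∈ H.map (spinProj m n) := by
    rintro p q (⟨h1, h2⟩ | ⟨h1, h2⟩)
    · obtain ⟨R, hdims, hperm⟩ := adj_spin_h p q h1 h2
      exact ⟨R.spin, hH ▸ Subgroup.subset_closure ⟨R, rfl, Or.inl hdims⟩, hperm⟩
    · obtain ⟨R, hdims, hperm⟩ := adj_spin_v p q h1 h2
      exact ⟨R.spin, hH ▸ Subgroup.subset_closure ⟨R, rfl, Or.inr hdims⟩, hperm⟩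
  -- all swaps are in the image of H
  have hswap : ∀ p q : Pos m n, p ≠ q → Equiv.swap p q ∈ H.map (spinProj m n) := by
    intro p q hne
    exact swap_mem_of_adj _ hadj
      ((p.1.val - q.1.val) + (q.1.val - p.1.val) +
        ((p.2.val - q.2.val) + (q.2.val - p.2.val))) p q hne le_rfl
  -- surjectivity
  have hsurj : ∀ σ : Equiv.Perm (Pos m n), ∃ x ∈ H, spinProj m n x = σ := by
    intro σ
    have htop : σ ∈ Subgroup.closure {τ : Equiv.Perm (Pos m n) | τ.IsSwap} := by
      rw [Equiv.Perm.closure_isSwap]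
      trivial
    have hmem : σ ∈ H.map (spinProj m n) := by
      refine Subgroup.closure_le _ |>.mpr ?_ htop
      rintro τ ⟨p, q, hpq, rfl⟩
      exact hswap p q hpq
    obtain ⟨x, hx, hx2⟩ := hmem
    exact ⟨x, hx, hx2⟩
  refine ⟨hinj, hsurj, ?_, ?_⟩
  · -- trivial intersection with the kernel
    rw [eq_bot_iff]
    intro x hx
    obtain ⟨hxH, hxK⟩ := hx
    have hker : spinProj m n x = 1 := hxK
    have : (⟨x, hxH⟩ : H) = (⟨1, one_mem H⟩ : H) := by
      apply hinj
      show spinProj m n x = spinProj m n 1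
      rw [hker, map_one]
    simpa using congrArg Subtype.val this
  · -- index computation
    have e : SpinElt m n ≃ (Equiv.Perm (Pos m n)) × (Pos m n → ZMod 2) :=
      ⟨fun x => (x.perm, x.flip), fun y => ⟨y.1, y.2⟩, fun x => rfl, fun y => rfl⟩
    haveI : Finite (SpinElt m n) := Finite.of_equiv _ e.symm
    have hPos : Nat.card (Pos m n) = m * n := by
      simp [Nat.card_eq_fintype_card]
    have hG : Nat.card (SpinElt m n) = Nat.card (Equiv.Perm (Pos m n)) * 2 ^ (m * n) := by
      rw [Nat.card_congr e, Nat.card_prod, Nat.card_fun, Nat.card_zmod, hPos]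
    have hHcard : Nat.card H = Nat.card (Equiv.Perm (Pos m n)) := by
      refine Nat.card_congr (Equiv.ofBijective (fun x : H => spinProj m n x) ⟨hinj, ?_⟩)
      intro σ
      obtain ⟨x, hx, hx2⟩ := hsurj σ
      exact ⟨⟨x, hx⟩, hx2⟩
    have hmul := Subgroup.index_mul_card H
    rw [hHcard, hG] at hmul
    have hpos : 0 < Nat.card (Equiv.Perm (Pos m n)) := Nat.card_pos
    have : H.index * Nat.card (Equiv.Perm (Pos m n)) =
        2 ^ (m * n) * Nat.card (Equiv.Perm (Pos m n)) := by
      rw [hmul, mul_comm]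
    exact Nat.eq_of_mul_eq_mul_right hpos this
end
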